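/- arXiv:1007.0695 — 3 statements merged into one kernel-verified Lean document; each statement's English description precedes it below -/
import Mathlib

section
/- The Farey tree Σ is a tree: it is connected and contains no cycles. In particular, any two Farey triangles are joined in Σ by a unique simple path. -/
/-- A Farey vertex is an element of `ℚ ∪ {∞}`; `none` represents `∞`. -/
abbrev FareyVertex := Option ℚ

/-- The numerator of the reduced form `a/b` (with `b ≥ 0`) of a Farey vertex; `∞ = 1/0`. -/
def fnum : FareyVertex → ℤ
  | none => 1
  | some r => r.num

/-- The denominator of the reduced form `a/b` (with `b ≥ 0`) of a Farey vertex; `∞ = 1/0`. -/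
def fden : FareyVertex → ℤ
  | none => 0
  | some r => (r.den : ℤ)

/-- Two Farey vertices with reduced forms `a/b` and `c/d` are Farey-neighbors if `|ad - bc| = 1`. -/
def FareyNeighbor (x y : FareyVertex) : Prop :=
  |fnum x * fden y - fden x * fnum y| = 1

/-- A Farey triangle: a set of three distinct pairwise Farey-neighbor Farey vertices. -/
@[ext]
structure FareyTriangle where
  verts : Finset FareyVertex
  card_eq : verts.card = 3
  neighbors : ∀ x ∈ verts, ∀ y ∈ verts, x ≠ y → FareyNeighbor x y

/-- The Farey tree `Σ`: vertices are the Farey triangles, two triangles being adjacent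
if and only if their intersection has exactly two elements. -/
def fareyTree : SimpleGraph FareyTriangle where
  Adj T T' := (T.verts ∩ T'.verts).card = 2
  symm := by
    constructor
    intro T T' h
    rwa [Finset.inter_comm]
  loopless := by
    constructor
    intro T h
    rw [Finset.inter_self, T.card_eq] at h
    omega

/-- The Farey vertex represented by the (not necessarily reduced) fraction `a/b`,
with the conventions `a/b = (-a)/(-b)` and `x/0 = ∞`. -/
def mkFarey (a b : ℤ) : FareyVertex :=
  if b = 0 then none else some ((a : ℚ) / (b : ℚ))

lemma neighbor_int_succ (i : ℤ) :
    FareyNeighbor (some (i : ℚ)) (some ((i + 1 : ℤ) : ℚ)) := by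
  have hn : (((i + 1 : ℤ) : ℚ)).num = i + 1 := Rat.num_intCast _
  have hd : (((i + 1 : ℤ) : ℚ)).den = 1 := Rat.den_intCast _
  simp only [FareyNeighbor, fnum, fden, hn, hd, Rat.num_intCast, Rat.den_intCast]
  simp

lemma neighbor_int_inf (i : ℤ) : FareyNeighbor (some (i : ℚ)) none := by
  simp [FareyNeighbor, fnum, fden]

lemma neighbor_symm {x y : FareyVertex} (h : FareyNeighbor x y) : FareyNeighbor y x := by
  unfold FareyNeighbor at h ⊢
  rw [← abs_neg]
  convert h using 2
  ring

/-- `△⁽ⁱ⁾`: the Farey triangle with vertices `i`, `i+1` and `∞`. -/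
def stdTriangle (i : ℤ) : FareyTriangle where
  verts := {some (i : ℚ), some ((i + 1 : ℤ) : ℚ), none}
  card_eq := by
    have h1 : (some (i : ℚ) : FareyVertex) ≠ some ((i + 1 : ℤ) : ℚ) := by
      simp only [ne_eq, Option.some.injEq]
      intro h
      have : (i : ℚ) = (i : ℚ) + 1 := by push_cast at h ⊢; linarith
      linarith
    simp [Finset.card_insert_of_notMem, h1]
  neighbors := by
    intro x hx y hy hxy
    have h1 := neighbor_int_succ i
    have h2 := neighbor_int_inf i
    have h3 := neighbor_int_inf (i + 1)
    simp only [Finset.mem_insert, Finset.mem_singleton] at hx hy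
    rcases hx with rfl | rfl | rfl <;> rcases hy with rfl | rfl | rfl <;>
      first
        | exact absurd rfl hxy
        | assumption
        | exact neighbor_symm h1
        | exact neighbor_symm h2
        | exact neighbor_symm h3

/-- `S p q` is the sum of the partial quotients in the expansion of `p/q`
as a regular continued fraction (for coprime `p ≥ 0`, `q ≥ 1`), with `S 0 1 = 0`. -/
def S (p q : ℕ) : ℕ :=
  if h : q = 0 then 0
  else p / q + S q (p % q)
termination_by q
decreasing_by exact Nat.mod_lt p (Nat.pos_of_ne_zero h)


lemma fden_nonneg (v : FareyVertex) : 0 ≤ fden v := by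
  cases v <;> simp [fden]

lemma fden_eq_zero {v : FareyVertex} (h : fden v = 0) : v = none := by
  cases v with
  | none => rfl
  | some r =>
    exfalso
    simp only [fden] at h
    exact r.den_nz (by exact_mod_cast h)

lemma fnum_of_fden_eq_zero {v : FareyVertex} (h : fden v = 0) : fnum v = 1 := by
  rw [fden_eq_zero h]; rfl

lemma vert_cop (v : FareyVertex) : Int.gcd (fnum v) (fden v) = 1 := by
  cases v with
  | none => simp [fnum, fden]
  | some r => simpa [fnum, fden, Int.gcd] using r.reduced

lemma vert_ext {v w : FareyVertex} (h1 : fnum v = fnum w) (h2 : fden v = fden w) : v = w := by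
  cases v with
  | none =>
    cases w with
    | none => rfl
    | some r =>
      exfalso
      simp only [fden] at h2
      exact r.den_nz (by exact_mod_cast h2.symm)
  | some r =>
    cases w with
    | none =>
      exfalso
      simp only [fden] at h2
      exact r.den_nz (by exact_mod_cast h2)
    | some s =>
      simp only [fnum, fden, Nat.cast_inj, Option.some.injEq] at h1 h2 ⊢
      exact Rat.ext h1 h2

lemma mkFarey_coords {p q : ℤ} (hq : 0 < q) (h : Int.gcd p q = 1) :
    fnum (mkFarey p q) = p ∧ fden (mkFarey p q) = q := by
  have : mkFarey p q = some ((p : ℚ) / q) := by simp [mkFarey, hq.ne']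
  rw [this]
  have hcop : Nat.Coprime p.natAbs q.natAbs := h
  constructor
  · simpa [fnum] using Rat.num_div_eq_of_coprime hq hcop
  · simpa [fden] using Rat.den_div_eq_of_coprime hq hcop

lemma mkFarey_neg (p q : ℤ) : mkFarey (-p) (-q) = mkFarey p q := by
  unfold mkFarey
  by_cases h : q = 0
  · simp [h]
  · rw [if_neg h, if_neg (by omega : ¬ -q = 0)]
    push_cast
    rw [neg_div_neg_eq]

lemma self_mkFarey (v : FareyVertex) : mkFarey (fnum v) (fden v) = v := by
  cases v with
  | none => rfl
  | some r =>
    simp only [mkFarey, fnum, fden]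
    split_ifs with h0
    · exact absurd h0 (by exact_mod_cast r.den_nz)
    norm_cast
    rw [Rat.num_divInt_den]
    simp

lemma FareyNeighbor.ne {x y : FareyVertex} (h : FareyNeighbor x y) : x ≠ y := by
  rintro rfl
  simp [FareyNeighbor, mul_comm] at h

lemma neighbor_symm' {x y : FareyVertex} (h : FareyNeighbor x y) : FareyNeighbor y x := by
  unfold FareyNeighbor at h ⊢
  rw [← abs_neg]; convert h using 2; ring

/-- mediant -/
def med (x y : FareyVertex) : FareyVertex := mkFarey (fnum x + fnum y) (fden x + fden y)

/-- difference -/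
def mdif (x y : FareyVertex) : FareyVertex := mkFarey (fnum x - fnum y) (fden x - fden y)

lemma cop_of_det {p q a b : ℤ} (h : p * b - q * a = 1 ∨ p * b - q * a = -1) :
    Int.gcd p q = 1 := by
  rcases h with h | h
  · exact Int.isCoprime_iff_gcd_eq_one.mp ⟨b, -a, by linarith⟩
  · exact Int.isCoprime_iff_gcd_eq_one.mp ⟨-b, a, by linarith⟩

lemma abs_eq_one {z : ℤ} (h : |z| = 1) : z = 1 ∨ z = -1 := by
  rcases abs_cases z with ⟨h1, _⟩ | ⟨h1, _⟩ <;> omega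

/-- coordinates of the mediant -/
lemma med_coords {x y : FareyVertex} (h : FareyNeighbor x y) :
    fnum (med x y) = fnum x + fnum y ∧ fden (med x y) = fden x + fden y := by
  have hx := fden_nonneg x
  have hy := fden_nonneg y
  have hpos : 0 < fden x + fden y := by
    rcases lt_or_ge 0 (fden x + fden y) with h' | h'
    · exact h'
    · exfalso
      have hx0 : fden x = 0 := by omega
      have hy0 : fden y = 0 := by omega
      exact h.ne (by rw [fden_eq_zero hx0, fden_eq_zero hy0])
  apply mkFarey_coords hpos
  apply cop_of_det (a := fnum x) (b := fden x)
  have := abs_eq_one h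
  rcases this with h' | h' <;> [right; left] <;> linarith

/-- key: solving for a common neighbor -/
lemma solve_lemma {a b c d p q : ℤ}
    (he : |a * d - b * c| = 1) (h1 : |p * b - q * a| = 1) (h2 : |p * d - q * c| = 1) :
    (p = a + c ∧ q = b + d) ∨ (p = -(a + c) ∧ q = -(b + d)) ∨
    (p = a - c ∧ q = b - d) ∨ (p = -(a - c) ∧ q = -(b - d)) := by
  have hp : p * (a * d - b * c) = a * (p * d - q * c) - c * (p * b - q * a) := by ring
  have hq : q * (a * d - b * c) = b * (p * d - q * c) - d * (p * b - q * a) := by ring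
  rcases abs_eq_one he with h | h <;> rcases abs_eq_one h1 with h1' | h1' <;>
    rcases abs_eq_one h2 with h2' | h2' <;>
    rw [h, h1', h2'] at hp hq <;> omega

lemma fden_add_pos {x y : FareyVertex} (h : FareyNeighbor x y) : 0 < fden x + fden y := by
  have hx := fden_nonneg x
  have hy := fden_nonneg y
  rcases lt_or_ge 0 (fden x + fden y) with h' | h'
  · exact h'
  · exact absurd (by rw [fden_eq_zero (by omega : fden x = 0),
      fden_eq_zero (by omega : fden y = 0)]) h.ne

lemma med_comm (x y : FareyVertex) : med x y = med y x := by
  unfold med; rw [add_comm (fnum x), add_comm (fden x)]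

lemma mdif_comm (x y : FareyVertex) : mdif x y = mdif y x := by
  unfold mdif
  rw [show fnum y - fnum x = -(fnum x - fnum y) by ring,
    show fden y - fden x = -(fden x - fden y) by ring, mkFarey_neg]

lemma neighbor_flip {x y : FareyVertex} :
    FareyNeighbor x y ↔ |fnum y * fden x - fden y * fnum x| = 1 := by
  unfold FareyNeighbor
  rw [← abs_neg]
  constructor <;> intro h <;> [skip; skip] <;> · rw [← h]; congr 1; ring

/-- the mediant is a neighbor of both parents -/
lemma med_neighbor_left {x y : FareyVertex} (h : FareyNeighbor x y) :
    FareyNeighbor (med x y) x := by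
  obtain ⟨h1, h2⟩ := med_coords h
  unfold FareyNeighbor
  rw [h1, h2, show (fnum x + fnum y) * fden x - (fden x + fden y) * fnum x
    = -(fnum x * fden y - fden x * fnum y) by ring, abs_neg]
  exact h

lemma med_neighbor_right {x y : FareyVertex} (h : FareyNeighbor x y) :
    FareyNeighbor (med x y) y := by
  rw [med_comm]; exact med_neighbor_left (neighbor_symm' h)

lemma common_neighbor {x y z : FareyVertex} (hxy : FareyNeighbor x y)
    (hxz : FareyNeighbor x z) (hyz : FareyNeighbor y z) :
    z = med x y ∨ z = mdif x y := by
  have hxz' : |fnum z * fden x - fden z * fnum x| = 1 := neighbor_flip.mp hxz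
  have hyz' : |fnum z * fden y - fden z * fnum y| = 1 := neighbor_flip.mp hyz
  have := solve_lemma hxy hxz' hyz'
  have hz := self_mkFarey z
  unfold med mdif
  rcases this with ⟨h1, h2⟩ | ⟨h1, h2⟩ | ⟨h1, h2⟩ | ⟨h1, h2⟩ <;>
    rw [← hz, h1, h2]
  · exact Or.inl rfl
  · exact Or.inl (mkFarey_neg _ _)
  · exact Or.inr rfl
  · exact Or.inr (mkFarey_neg _ _)

/-- recover the second parent from the mediant -/
lemma mdif_med_left {x y : FareyVertex} (h : FareyNeighbor x y) : mdif (med x y) x = y := by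
  obtain ⟨h1, h2⟩ := med_coords h
  unfold mdif
  rw [h1, h2, show fnum x + fnum y - fnum x = fnum y by ring,
    show fden x + fden y - fden x = fden y by ring, self_mkFarey]

lemma mdif_med_right {x y : FareyVertex} (h : FareyNeighbor x y) : mdif (med x y) y = x := by
  rw [med_comm]; exact mdif_med_left (neighbor_symm' h)

lemma med_ne_left {x y : FareyVertex} (h : FareyNeighbor x y) : med x y ≠ x := by
  intro heq
  obtain ⟨h1, h2⟩ := med_coords h
  rw [heq] at h1 h2
  have hy0 : fden y = 0 := by omega
  have := fnum_of_fden_eq_zero hy0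
  omega

lemma med_ne_right {x y : FareyVertex} (h : FareyNeighbor x y) : med x y ≠ y := by
  rw [med_comm]; exact med_ne_left (neighbor_symm' h)

lemma unit_of_abs_mul {m n : ℤ} (h : |m * n| = 1) : n = 1 ∨ n = -1 := by
  rcases abs_eq_one h with h' | h'
  · exact Int.isUnit_iff.mp (IsUnit.of_mul_eq_one (a := n) m (by linarith [mul_comm m n]))
  · rcases Int.isUnit_iff.mp (IsUnit.of_mul_eq_one (a := n) (-m) (by linarith [mul_comm m n])) with
      h'' | h'' <;> omega

lemma mdif_coords {x y : FareyVertex} (h : FareyNeighbor x y) :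
    ∃ ε : ℤ, (ε = 1 ∨ ε = -1) ∧ fnum (mdif x y) = ε * (fnum x - fnum y) ∧
      fden (mdif x y) = ε * (fden x - fden y) := by
  have habs := abs_eq_one h
  rcases lt_trichotomy (fden x - fden y) 0 with hlt | heq | hgt
  · refine ⟨-1, Or.inr rfl, ?_⟩
    have hcop : Int.gcd (fnum y - fnum x) (fden y - fden x) = 1 := by
      apply cop_of_det (a := fnum y) (b := fden y)
      have heq2 : (fnum y - fnum x) * fden y - (fden y - fden x) * fnum y
          = -(fnum x * fden y - fden x * fnum y) := by ring
      rw [heq2]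
      rcases habs with h' | h' <;> [right; left] <;> omega
    have hpos : 0 < fden y - fden x := by linarith
    have hco := mkFarey_coords (p := fnum y - fnum x) (q := fden y - fden x) hpos hcop
    rw [mdif_comm]
    unfold mdif at hco ⊢
    constructor <;> omega
  · have hnd : fden x = fden y := by omega
    have hu : fnum x - fnum y = 1 ∨ fnum x - fnum y = -1 := by
      apply unit_of_abs_mul (m := fden x)
      have heq2 : fden x * (fnum x - fnum y) = fnum x * fden y - fden x * fnum y := by
        rw [← hnd]; ring
      rw [heq2]; exact h
    refine ⟨fnum x - fnum y, hu, ?_⟩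
    have hnone : mdif x y = none := by unfold mdif; rw [heq]; rfl
    rw [hnone]
    constructor
    · show (1 : ℤ) = _
      rcases hu with h' | h' <;> rw [h'] <;> ring
    · show (0 : ℤ) = _
      rw [heq]; ring
  · refine ⟨1, Or.inl rfl, ?_⟩
    have hcop : Int.gcd (fnum x - fnum y) (fden x - fden y) = 1 := by
      apply cop_of_det (a := fnum x) (b := fden x)
      have heq2 : (fnum x - fnum y) * fden x - (fden x - fden y) * fnum x
          = fnum x * fden y - fden x * fnum y := by ring
      rw [heq2]; exact habs
    have hco := mkFarey_coords (p := fnum x - fnum y) (q := fden x - fden y) hgt hcop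
    unfold mdif at hco ⊢
    constructor <;> omega

lemma mdif_neighbor_left {x y : FareyVertex} (h : FareyNeighbor x y) :
    FareyNeighbor (mdif x y) x := by
  obtain ⟨ε, hε, h1, h2⟩ := mdif_coords h
  have hdet : |fnum x * fden y - fden x * fnum y| = 1 := h
  unfold FareyNeighbor
  rw [h1, h2, show ε * (fnum x - fnum y) * fden x - ε * (fden x - fden y) * fnum x
    = ε * (fnum x * fden y - fden x * fnum y) from by ring, abs_mul, hdet, mul_one]
  rcases hε with h' | h' <;> simp [h']

lemma mdif_neighbor_right {x y : FareyVertex} (h : FareyNeighbor x y) :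
    FareyNeighbor (mdif x y) y := by
  rw [mdif_comm]; exact mdif_neighbor_left (neighbor_symm' h)

lemma med_ne_mdif {x y : FareyVertex} (h : FareyNeighbor x y) : med x y ≠ mdif x y := by
  intro heq
  obtain ⟨hm1, hm2⟩ := med_coords h
  obtain ⟨ε, hε, h1, h2⟩ := mdif_coords h
  rw [heq] at hm1 hm2
  have hbd := fden_nonneg x
  have hbd' := fden_nonneg y
  rcases hε with h' | h' <;> subst h'
  · have hy0 : fden y = 0 := by omega
    have := fnum_of_fden_eq_zero hy0
    omega
  · have hx0 : fden x = 0 := by omega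
    have := fnum_of_fden_eq_zero hx0
    omega

lemma num_sign {x y : FareyVertex} (h : FareyNeighbor x y) (hx : fden x ≠ 0) (hy : fden y ≠ 0) :
    (0 ≤ fnum x ∧ 0 ≤ fnum y) ∨ (fnum x ≤ 0 ∧ fnum y ≤ 0) := by
  have hb : 1 ≤ fden x := by have := fden_nonneg x; omega
  have hd : 1 ≤ fden y := by have := fden_nonneg y; omega
  have habs := abs_eq_one h
  rcases le_or_gt 0 (fnum x) with h1 | h1 <;> rcases le_or_gt 0 (fnum y) with h2 | h2
  · exact Or.inl ⟨h1, h2⟩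
  · rcases lt_or_eq_of_le h1 with h1' | h1'
    · exfalso
      have p1 := Int.lt_iff_add_one_le.mp (mul_pos h1' (show (0:ℤ) < fden y by omega))
      have p2 := Int.lt_iff_add_one_le.mp
        (mul_neg_of_pos_of_neg (show (0:ℤ) < fden x by omega) h2)
      rcases habs with h' | h' <;> linarith
    · exact Or.inr ⟨by omega, by omega⟩
  · rcases lt_or_eq_of_le h2 with h2' | h2'
    · exfalso
      have p1 := Int.lt_iff_add_one_le.mp
        (mul_neg_of_neg_of_pos h1 (show (0:ℤ) < fden y by omega))
      have p2 := Int.lt_iff_add_one_le.mp (mul_pos (show (0:ℤ) < fden x by omega) h2')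
      rcases habs with h' | h' <;> linarith
    · exact Or.inr ⟨by omega, by omega⟩
  · exact Or.inr ⟨by omega, by omega⟩

def tri (x y z : FareyVertex) (hxy : FareyNeighbor x y) (hxz : FareyNeighbor x z)
    (hyz : FareyNeighbor y z) : FareyTriangle where
  verts := {x, y, z}
  card_eq := by
    rw [Finset.card_insert_of_notMem (by simp [hxy.ne, hxz.ne]),
      Finset.card_insert_of_notMem (by simp [hyz.ne]), Finset.card_singleton]
  neighbors := by
    intro u hu v hv huv
    simp only [Finset.mem_insert, Finset.mem_singleton] at hu hv
    rcases hu with rfl | rfl | rfl <;> rcases hv with rfl | rfl | rfl <;>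
      first
        | exact absurd rfl huv
        | assumption
        | exact neighbor_symm' hxy
        | exact neighbor_symm' hxz
        | exact neighbor_symm' hyz

def fwt (v : FareyVertex) : ℕ := (fnum v).natAbs + (fden v).natAbs

def mu (T : FareyTriangle) : ℕ := T.verts.sum fwt

lemma sum_triple {x y z : FareyVertex} (hxy : x ≠ y) (hxz : x ≠ z) (hyz : y ≠ z) :
    ({x, y, z} : Finset FareyVertex).sum fwt = fwt x + fwt y + fwt z := by
  rw [Finset.sum_insert (by simp [hxy, hxz]), Finset.sum_insert (by simp [hyz]),
    Finset.sum_singleton]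
  ring

lemma tri_decomp (T : FareyTriangle) :
    ∃ x y z, FareyNeighbor x y ∧ FareyNeighbor x z ∧ FareyNeighbor y z ∧
      T.verts = {x, y, z} := by
  obtain ⟨x, y, z, hxy, hxz, hyz, hv⟩ := Finset.card_eq_three.mp T.card_eq
  have hx : x ∈ T.verts := by rw [hv]; simp
  have hy : y ∈ T.verts := by rw [hv]; simp
  have hz : z ∈ T.verts := by rw [hv]; simp
  exact ⟨x, y, z, T.neighbors x hx y hy hxy, T.neighbors x hx z hz hxz,
    T.neighbors y hy z hz hyz, hv⟩

lemma mkFarey_one (p : ℤ) : mkFarey p 1 = some ((p : ℚ)) := by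
  unfold mkFarey; norm_num

lemma int_coords (i : ℤ) : fnum (some ((i : ℚ))) = i ∧ fden (some ((i : ℚ))) = 1 := by
  constructor
  · simp [fnum]
  · simp [fden]

lemma den_one_int {v : FareyVertex} (h : fden v = 1) : ∃ j : ℤ, v = some ((j : ℚ)) := by
  refine ⟨fnum v, ?_⟩
  have := self_mkFarey v
  rw [h, mkFarey_one] at this
  exact this.symm

lemma card_triple {A B C : FareyVertex} (hAB : A ≠ B) (hAC : A ≠ C) (hBC : B ≠ C) :
    ({A, B, C} : Finset FareyVertex).card = 3 := by
  rw [Finset.card_insert_of_notMem (by simp [hAB, hAC]),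
    Finset.card_insert_of_notMem (by simp [hBC]), Finset.card_singleton]

lemma card_pair {A B : FareyVertex} (hAB : A ≠ B) :
    ({A, B} : Finset FareyVertex).card = 2 := by
  rw [Finset.card_insert_of_notMem (by simp [hAB]), Finset.card_singleton]

lemma pair_sub_triple {I : Finset FareyVertex} {A B C : FareyVertex}
    (hsub : I ⊆ {A, B, C}) (hcard : I.card = 2)
    (hAB : A ≠ B) (hAC : A ≠ C) (hBC : B ≠ C) :
    I = {A, B} ∨ I = {A, C} ∨ I = {B, C} := by
  have pair_case : ∀ (P Q : FareyVertex), P ≠ Q → P ∈ I → Q ∈ I → I = {P, Q} := by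
    intro P Q hPQ hP hQ
    have hs : ({P, Q} : Finset FareyVertex) ⊆ I := by
      intro u hu; simp only [Finset.mem_insert, Finset.mem_singleton] at hu
      rcases hu with rfl | rfl <;> assumption
    exact (Finset.eq_of_subset_of_card_le hs (by rw [hcard, card_pair hPQ])).symm
  have small : ∀ P : FareyVertex, (∀ u ∈ I, u = P) → False := by
    intro P hP
    have hs : I ⊆ {P} := fun u hu => Finset.mem_singleton.mpr (hP u hu)
    have := Finset.card_le_card hs
    rw [hcard, Finset.card_singleton] at this
    omega
  by_cases hA : A ∈ I <;> by_cases hB : B ∈ I <;> by_cases hC : C ∈ I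
  · exfalso
    have hs : ({A, B, C} : Finset FareyVertex) ⊆ I := by
      intro u hu; simp only [Finset.mem_insert, Finset.mem_singleton] at hu
      rcases hu with rfl | rfl | rfl <;> assumption
    have := Finset.card_le_card hs
    rw [card_triple hAB hAC hBC, hcard] at this
    omega
  · exact Or.inl (pair_case A B hAB hA hB)
  · exact Or.inr (Or.inl (pair_case A C hAC hA hC))
  · exfalso
    apply small A
    intro u hu
    have := hsub hu
    simp only [Finset.mem_insert, Finset.mem_singleton] at this
    rcases this with rfl | rfl | rfl
    · rfl
    · exact absurd hu hB
    · exact absurd hu hC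
  · exact Or.inr (Or.inr (pair_case B C hBC hB hC))
  · exfalso
    apply small B
    intro u hu
    have := hsub hu
    simp only [Finset.mem_insert, Finset.mem_singleton] at this
    rcases this with rfl | rfl | rfl
    · exact absurd hu hA
    · rfl
    · exact absurd hu hC
  · exfalso
    apply small C
    intro u hu
    have := hsub hu
    simp only [Finset.mem_insert, Finset.mem_singleton] at this
    rcases this with rfl | rfl | rfl
    · exact absurd hu hA
    · exact absurd hu hB
    · rfl
  · exfalso
    apply small A
    intro u hu
    have := hsub hu
    simp only [Finset.mem_insert, Finset.mem_singleton] at this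
    rcases this with rfl | rfl | rfl
    · rfl
    · exact absurd hu hB
    · exact absurd hu hC

lemma adj_decomp' {T T' : FareyTriangle} {A B C : FareyVertex} (hv : T.verts = {A, B, C})
    (hAB : A ≠ B) (hAC : A ≠ C) (hBC : B ≠ C) (h : fareyTree.Adj T T') :
    ∃ z', z' ∉ T.verts ∧
      (T'.verts = {A, B, z'} ∨ T'.verts = {A, C, z'} ∨ T'.verts = {B, C, z'}) := by
  have hcard : (T.verts ∩ T'.verts).card = 2 := h
  have hsub : T.verts ∩ T'.verts ⊆ {A, B, C} := by
    rw [← hv]; exact Finset.inter_subset_left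
  have hsub' : T.verts ∩ T'.verts ⊆ T'.verts := Finset.inter_subset_right
  have hsdcard : (T'.verts \ (T.verts ∩ T'.verts)).card = 1 := by
    rw [Finset.card_sdiff_of_subset hsub', T'.card_eq, hcard]
  obtain ⟨z', hz'⟩ := Finset.card_eq_one.mp hsdcard
  have hz'mem : z' ∈ T'.verts \ (T.verts ∩ T'.verts) := by rw [hz']; simp
  have hz'1 : z' ∈ T'.verts := (Finset.mem_sdiff.mp hz'mem).1
  have hz'2 : z' ∉ T.verts := by
    intro hmem
    exact (Finset.mem_sdiff.mp hz'mem).2 (Finset.mem_inter.mpr ⟨hmem, hz'1⟩)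
  have hunion : T'.verts = (T.verts ∩ T'.verts) ∪ {z'} := by
    rw [← hz', Finset.union_sdiff_of_subset hsub']
  refine ⟨z', hz'2, ?_⟩
  rcases pair_sub_triple hsub hcard hAB hAC hBC with hI | hI | hI <;> rw [hI] at hunion
  · left; rw [hunion]; ext a; simp
  · right; left; rw [hunion]; ext a; simp
  · right; right; rw [hunion]; ext a; simp

lemma third_classify {T' : FareyTriangle} {P Q z' : FareyVertex} (hv : T'.verts = {P, Q, z'})
    (hPQ : FareyNeighbor P Q) (hP : z' ≠ P) (hQ : z' ≠ Q) :
    z' = med P Q ∨ z' = mdif P Q := by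
  have hPm : P ∈ T'.verts := by rw [hv]; simp
  have hQm : Q ∈ T'.verts := by rw [hv]; simp
  have hzm : z' ∈ T'.verts := by rw [hv]; simp
  exact common_neighbor hPQ (T'.neighbors P hPm z' hzm (Ne.symm hP))
    (T'.neighbors Q hQm z' hzm (Ne.symm hQ))

lemma ne_int {i j : ℤ} (h : i ≠ j) : (some (i : ℚ) : FareyVertex) ≠ some ((j : ℚ)) := by
  simp only [ne_eq, Option.some.injEq, Rat.intCast_inj]
  exact h

lemma fnum_none : fnum none = 1 := rfl
lemma fden_none : fden none = 0 := rfl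

lemma neighbor_int_inf'' (i : ℤ) : FareyNeighbor (some ((i : ℚ))) none := by
  unfold FareyNeighbor
  rw [(int_coords i).1, (int_coords i).2, fnum_none, fden_none]
  norm_num

lemma neighbor_int_int {i j : ℤ} (h : |i - j| = 1) :
    FareyNeighbor (some ((i : ℚ))) (some ((j : ℚ))) := by
  unfold FareyNeighbor
  rw [(int_coords i).1, (int_coords i).2, (int_coords j).1, (int_coords j).2]
  simpa using h

lemma med_int_inf (i : ℤ) : med (some ((i : ℚ))) none = some (((i + 1 : ℤ) : ℚ)) := by
  unfold med
  rw [(int_coords i).1, (int_coords i).2, fnum_none, fden_none]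
  norm_num [mkFarey_one]

lemma mdif_int_inf (i : ℤ) : mdif (some ((i : ℚ))) none = some (((i - 1 : ℤ) : ℚ)) := by
  unfold mdif
  rw [(int_coords i).1, (int_coords i).2, fnum_none, fden_none]
  norm_num [mkFarey_one]

lemma mdif_int_succ (i : ℤ) : mdif (some ((i : ℚ))) (some (((i + 1 : ℤ) : ℚ))) = none := by
  unfold mdif
  rw [(int_coords i).1, (int_coords i).2, (int_coords (i + 1)).1, (int_coords (i + 1)).2]
  norm_num [mkFarey]

lemma fwt_int (i : ℤ) : fwt (some ((i : ℚ))) = i.natAbs + 1 := by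
  unfold fwt
  rw [(int_coords i).1, (int_coords i).2]
  rfl

lemma fwt_none : fwt none = 1 := rfl

lemma std_verts (i : ℤ) :
    (stdTriangle i).verts = {some ((i : ℚ)), some (((i + 1 : ℤ) : ℚ)), none} := rfl

lemma mu_std (i : ℤ) : mu (stdTriangle i) = i.natAbs + (i + 1).natAbs + 3 := by
  unfold mu
  rw [std_verts, sum_triple (ne_int (by omega)) (by simp) (by simp), fwt_int, fwt_int, fwt_none]
  ring

lemma std_inj {i j : ℤ} (h : stdTriangle i = stdTriangle j) : i = j := by
  have h1 : (some ((i : ℚ)) : FareyVertex) ∈ (stdTriangle j).verts := by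
    rw [← h, std_verts]; simp
  have h2 : (some (((i + 1 : ℤ) : ℚ)) : FareyVertex) ∈ (stdTriangle j).verts := by
    rw [← h, std_verts]; simp
  rw [std_verts] at h1 h2
  simp only [Finset.mem_insert, Finset.mem_singleton, Option.some.injEq,
    reduceCtorEq, or_false] at h1 h2
  have h1' : i = j ∨ i = j + 1 := by
    rcases h1 with h' | h'
    · exact Or.inl (by exact_mod_cast h')
    · exact Or.inr (by exact_mod_cast h')
  have h2' : i + 1 = j ∨ i + 1 = j + 1 := by
    rcases h2 with h' | h'
    · exact Or.inl (by exact_mod_cast h')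
    · exact Or.inr (by exact_mod_cast h')
  omega

lemma std_of_mem_none {T : FareyTriangle} (h : none ∈ T.verts) : ∃ i, T = stdTriangle i := by
  obtain ⟨x, y, z, hxy, hxz, hyz, hv⟩ := tri_decomp T
  -- whichever of x y z is none, the others are integers
  have key : ∀ u v : FareyVertex, FareyNeighbor u v → u = none → ∃ j : ℤ, v = some ((j : ℚ)) := by
    intro u v huv hu
    subst hu
    have : |fden v| = 1 := by
      have := neighbor_flip.mp huv
      rw [fnum_none, fden_none] at this
      simpa using this
    have hd : fden v = 1 := by
      have h2 := fden_nonneg v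
      rcases abs_eq_one this with h' | h' <;> omega
    exact den_one_int hd
  rw [hv] at h
  simp only [Finset.mem_insert, Finset.mem_singleton] at h
  have main : ∀ u v : FareyVertex, FareyNeighbor u v →
      (∀ w, w ∈ ({x, y, z} : Finset FareyVertex) ↔ w = u ∨ w = v ∨ w = none) →
      FareyNeighbor u none → FareyNeighbor v none → ∃ i, T = stdTriangle i := by
    intro u v huv hset hun hvn
    obtain ⟨a, ha⟩ := key none u (neighbor_symm' hun) rfl
    obtain ⟨b, hb⟩ := key none v (neighbor_symm' hvn) rfl
    subst ha hb
    have hab : |a - b| = 1 := by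
      have : |a * 1 - 1 * b| = 1 := by
        have h' : FareyNeighbor (some ((a:ℚ))) (some ((b:ℚ))) := huv
        unfold FareyNeighbor at h'
        rwa [(int_coords a).1, (int_coords a).2, (int_coords b).1, (int_coords b).2] at h'
      simpa using this
    rcases abs_eq_one hab with h' | h'
    · -- a = b + 1, so T = stdTriangle b
      refine ⟨b, ?_⟩
      ext1
      rw [hv, std_verts]
      ext w
      rw [hset w]
      have : ((b + 1 : ℤ) : ℚ) = ((a : ℚ)) := by exact_mod_cast (by omega : b + 1 = a)
      rw [this]
      simp only [Finset.mem_insert, Finset.mem_singleton]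
      try tauto
    · refine ⟨a, ?_⟩
      ext1
      rw [hv, std_verts]
      ext w
      rw [hset w]
      have : ((a + 1 : ℤ) : ℚ) = ((b : ℚ)) := by exact_mod_cast (by omega : a + 1 = b)
      rw [this]
      simp only [Finset.mem_insert, Finset.mem_singleton]
      try tauto
  rcases h with rfl | rfl | rfl
  · exact main y z hyz (by intro w; simp only [Finset.mem_insert, Finset.mem_singleton]; try tauto) (neighbor_symm' hxy) (neighbor_symm' hxz)
  · exact main x z hxz (by intro w; simp only [Finset.mem_insert, Finset.mem_singleton]; try tauto) hxy (neighbor_symm' hyz)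
  · exact main x y hxy (by intro w; simp only [Finset.mem_insert, Finset.mem_singleton]; try tauto) hxz hyz

lemma adj_of_verts {T T' : FareyTriangle} {P Q z z' : FareyVertex}
    (hT : T.verts = {P, Q, z}) (hT' : T'.verts = {P, Q, z'})
    (hPQ : P ≠ Q) (hzP : z ≠ P) (hzQ : z ≠ Q) (hz'P : z' ≠ P) (hz'Q : z' ≠ Q) (hzz' : z ≠ z') :
    fareyTree.Adj T T' := by
  show (T.verts ∩ T'.verts).card = 2
  have : T.verts ∩ T'.verts = {P, Q} := by
    rw [hT, hT']
    ext a
    simp only [Finset.mem_inter, Finset.mem_insert, Finset.mem_singleton]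
    constructor
    · rintro ⟨rfl | rfl | rfl, h2⟩ <;> tauto
    · rintro (rfl | rfl) <;> tauto
  rw [this]
  exact card_pair hPQ

lemma adj_std_succ (i : ℤ) : fareyTree.Adj (stdTriangle i) (stdTriangle (i + 1)) := by
  have h1 : (stdTriangle i).verts = {some (((i + 1 : ℤ) : ℚ)), none, some ((i : ℚ))} := by
    rw [std_verts]; ext a; simp; tauto
  have h2 : (stdTriangle (i + 1)).verts
      = {some (((i + 1 : ℤ) : ℚ)), none, some (((i + 1 + 1 : ℤ) : ℚ))} := by
    rw [std_verts]; ext a; simp; tauto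
  exact adj_of_verts h1 h2 (by simp) (ne_int (by omega)) (by simp) (ne_int (by omega)) (by simp)
    (ne_int (by omega))

lemma mdif_ne_left {x y : FareyVertex} (h : FareyNeighbor x y)
    (hx : fden x ≠ 0) (hy : fden y ≠ 0) : mdif x y ≠ x := by
  intro heq
  obtain ⟨ε, hε, h1, h2⟩ := mdif_coords h
  rw [heq] at h1 h2
  have hbx := fden_nonneg x
  have hby := fden_nonneg y
  rcases hε with rfl | rfl
  · omega
  · have hn : fnum y = 2 * fnum x := by omega
    have hdd : fden y = 2 * fden x := by omega
    have hc := vert_cop y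
    rw [hn, hdd, Int.gcd_mul_left] at hc
    rw [show ((2:ℤ)).natAbs = 2 from rfl] at hc
    omega

lemma mdif_ne_right {x y : FareyVertex} (h : FareyNeighbor x y)
    (hx : fden x ≠ 0) (hy : fden y ≠ 0) : mdif x y ≠ y := by
  rw [mdif_comm]; exact mdif_ne_left (neighbor_symm' h) hy hx

lemma mu_verts {T : FareyTriangle} {x y z : FareyVertex} (h : T.verts = {x, y, z})
    (hxy : x ≠ y) (hxz : x ≠ z) (hyz : y ≠ z) : mu T = fwt x + fwt y + fwt z := by
  unfold mu
  rw [h, sum_triple hxy hxz hyz]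

lemma finite_decomp {T : FareyTriangle} (h : none ∉ T.verts) :
    ∃ x y, FareyNeighbor x y ∧ fden x ≠ 0 ∧ fden y ≠ 0 ∧ T.verts = {x, y, med x y} := by
  obtain ⟨x, y, z, hxy, hxz, hyz, hv⟩ := tri_decomp T
  have hmem : ∀ v, v ∈ T.verts → fden v ≠ 0 := by
    intro v hv' h0
    exact h ((fden_eq_zero h0) ▸ hv')
  have hfx : fden x ≠ 0 := hmem x (by rw [hv]; simp)
  have hfy : fden y ≠ 0 := hmem y (by rw [hv]; simp)
  have hfz : fden z ≠ 0 := hmem z (by rw [hv]; simp)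
  rcases common_neighbor hxy hxz hyz with hz | hz
  · exact ⟨x, y, hxy, hfx, hfy, by rw [hv, hz]⟩
  · obtain ⟨ε, hε, h1, h2⟩ := mdif_coords hxy
    rw [← hz] at h1 h2
    rcases hε with rfl | rfl
    · have e1 : fnum z + fnum y = fnum x := by omega
      have e2 : fden z + fden y = fden x := by omega
      have hmx : med z y = x := by unfold med; rw [e1, e2, self_mkFarey]
      refine ⟨z, y, neighbor_symm' hyz, hfz, hfy, ?_⟩
      rw [hmx, hv]
      ext a; simp only [Finset.mem_insert, Finset.mem_singleton]; tauto
    · have e1 : fnum z + fnum x = fnum y := by omega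
      have e2 : fden z + fden x = fden y := by omega
      have hmy : med z x = y := by unfold med; rw [e1, e2, self_mkFarey]
      refine ⟨z, x, neighbor_symm' hxz, hfz, hfx, ?_⟩
      rw [hmy, hv]
      ext a; simp only [Finset.mem_insert, Finset.mem_singleton]; tauto

lemma fwt_mdif_lt_med {x y : FareyVertex} (h : FareyNeighbor x y)
    (hx : fden x ≠ 0) (hy : fden y ≠ 0) : fwt (mdif x y) < fwt (med x y) := by
  obtain ⟨hm1, hm2⟩ := med_coords h
  obtain ⟨ε, hε, h1, h2⟩ := mdif_coords h
  have hs := num_sign h hx hy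
  have hbx := fden_nonneg x
  have hby := fden_nonneg y
  unfold fwt
  rw [hm1, hm2, h1, h2]
  rcases hε with rfl | rfl <;> omega

lemma fwt_child_gt₁ {x y : FareyVertex} (h : FareyNeighbor x y)
    (hx : fden x ≠ 0) (hy : fden y ≠ 0) : fwt y < fwt (med x (med x y)) := by
  obtain ⟨hm1, hm2⟩ := med_coords h
  have hxm : FareyNeighbor x (med x y) := neighbor_symm' (med_neighbor_left h)
  obtain ⟨hn1, hn2⟩ := med_coords hxm
  have hs := num_sign h hx hy
  have hbx := fden_nonneg x
  have hby := fden_nonneg y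
  unfold fwt
  rw [hn1, hn2, hm1, hm2]
  omega

lemma fwt_child_gt₂ {x y : FareyVertex} (h : FareyNeighbor x y)
    (hx : fden x ≠ 0) (hy : fden y ≠ 0) : fwt x < fwt (med y (med x y)) := by
  obtain ⟨hm1, hm2⟩ := med_coords h
  have hym : FareyNeighbor y (med x y) := neighbor_symm' (med_neighbor_right h)
  obtain ⟨hn1, hn2⟩ := med_coords hym
  have hs := num_sign h hx hy
  have hbx := fden_nonneg x
  have hby := fden_nonneg y
  unfold fwt
  rw [hn1, hn2, hm1, hm2]
  omega

lemma small_adj_fin {x y : FareyVertex} {T T' : FareyTriangle} (hxy : FareyNeighbor x y)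
    (hx : fden x ≠ 0) (hy : fden y ≠ 0) (hT : T.verts = {x, y, med x y})
    (h : fareyTree.Adj T T') (hm : mu T' ≤ mu T) : T'.verts = {x, y, mdif x y} := by
  have hxney : x ≠ y := hxy.ne
  have hxm : x ≠ med x y := (med_ne_left hxy).symm
  have hym : y ≠ med x y := (med_ne_right hxy).symm
  obtain ⟨z', hz'out, hcase⟩ := adj_decomp' hT hxney hxm hym h
  have hz'x : z' ≠ x := fun he => hz'out (by rw [hT, he]; simp)
  have hz'y : z' ≠ y := fun he => hz'out (by rw [hT, he]; simp)
  have hz'm : z' ≠ med x y := fun he => hz'out (by rw [hT, he]; simp)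
  have hmuT : mu T = fwt x + fwt y + fwt (med x y) := mu_verts hT hxney hxm hym
  rcases hcase with hv' | hv' | hv'
  · rcases third_classify hv' hxy hz'x hz'y with h' | h'
    · exact absurd h' hz'm
    · rw [hv', h']
  · exfalso
    have hxm' : FareyNeighbor x (med x y) := neighbor_symm' (med_neighbor_left hxy)
    rcases third_classify hv' hxm' hz'x hz'm with h' | h'
    · -- z' = med x (med x y), weight too big
      have hmuT' : mu T' = fwt x + fwt (med x y) + fwt z' :=
        mu_verts hv' hxm hz'x.symm hz'm.symm
      have := fwt_child_gt₁ hxy hx hy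
      rw [← h'] at this
      omega
    · -- z' = mdif x (med x y) = y, contradiction
      rw [mdif_comm, mdif_med_left hxy] at h'
      exact hz'y h'
  · exfalso
    have hym' : FareyNeighbor y (med x y) := neighbor_symm' (med_neighbor_right hxy)
    rcases third_classify hv' hym' hz'y hz'm with h' | h'
    · have hmuT' : mu T' = fwt y + fwt (med x y) + fwt z' :=
        mu_verts hv' hym hz'y.symm hz'm.symm
      have := fwt_child_gt₂ hxy hx hy
      rw [← h'] at this
      omega
    · rw [mdif_comm, mdif_med_right hxy] at h'
      exact hz'x h'

lemma small_adj_std {i : ℤ} {T' : FareyTriangle} (h : fareyTree.Adj (stdTriangle i) T')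
    (hm : mu T' ≤ mu (stdTriangle i)) :
    (0 ≤ i ∧ T' = stdTriangle (i - 1)) ∨ (i < 0 ∧ T' = stdTriangle (i + 1)) := by
  have hAB : (some ((i : ℚ)) : FareyVertex) ≠ some (((i + 1 : ℤ) : ℚ)) := ne_int (by omega)
  have hAC : (some ((i : ℚ)) : FareyVertex) ≠ none := by simp
  have hBC : (some (((i + 1 : ℤ) : ℚ)) : FareyVertex) ≠ none := by simp
  obtain ⟨z', hz'out, hcase⟩ := adj_decomp' (std_verts i) hAB hAC hBC h
  have hz'A : z' ≠ some ((i : ℚ)) := fun he => hz'out (by rw [std_verts, he]; simp)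
  have hz'B : z' ≠ some (((i + 1 : ℤ) : ℚ)) := fun he => hz'out (by rw [std_verts, he]; simp)
  have hz'C : z' ≠ none := fun he => hz'out (by rw [std_verts, he]; simp)
  have hABn : FareyNeighbor (some ((i : ℚ))) (some (((i + 1 : ℤ) : ℚ))) :=
    neighbor_int_int (by rw [show i - (i + 1) = -1 from by ring]; norm_num)
  have hACn : FareyNeighbor (some ((i : ℚ))) none := neighbor_int_inf'' i
  have hBCn : FareyNeighbor (some (((i + 1 : ℤ) : ℚ))) none := neighbor_int_inf'' (i + 1)
  have hmuT := mu_std i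
  rcases hcase with hv' | hv' | hv'
  · exfalso
    rcases third_classify hv' hABn hz'A hz'B with h' | h'
    · -- z' = med = (2i+1)/2 : too heavy
      obtain ⟨hn1, hn2⟩ := med_coords hABn
      rw [(int_coords i).1, (int_coords (i + 1)).1] at hn1
      rw [(int_coords i).2, (int_coords (i + 1)).2] at hn2
      have hmuT' : mu T' = fwt (some ((i : ℚ))) + fwt (some (((i + 1 : ℤ) : ℚ))) + fwt z' :=
        mu_verts hv' hAB hz'A.symm hz'B.symm
      have hfz : fwt z' = (i + (i + 1)).natAbs + 2 := by
        rw [h']; unfold fwt; rw [hn1, hn2]; norm_num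
      rw [fwt_int, fwt_int] at hmuT'
      omega
    · rw [mdif_int_succ] at h'
      exact hz'C h'
  · -- pair {i, ∞}
    rcases third_classify hv' hACn hz'A hz'C with h' | h'
    · rw [med_int_inf] at h'
      exact absurd h' hz'B
    · rw [mdif_int_inf] at h'
      have hT'v : T' = stdTriangle (i - 1) := by
        ext1
        rw [hv', h', std_verts]
        have hc : ((i - 1 + 1 : ℤ) : ℚ) = ((i : ℚ)) := by norm_num
        rw [hc]
        ext a
        simp only [Finset.mem_insert, Finset.mem_singleton]
        tauto
      left
      rw [hT'v] at hm
      rw [mu_std, hmuT] at hm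
      exact ⟨by omega, hT'v⟩
  · -- pair {i+1, ∞}
    rcases third_classify hv' hBCn hz'B hz'C with h' | h'
    · rw [med_int_inf] at h'
      have hT'v : T' = stdTriangle (i + 1) := by
        ext1
        rw [hv', h', std_verts]
        ext a
        simp only [Finset.mem_insert, Finset.mem_singleton]
        tauto
      right
      rw [hT'v] at hm
      rw [mu_std, hmuT] at hm
      exact ⟨by omega, hT'v⟩
    · rw [mdif_int_inf] at h'
      have : ((i + 1 - 1 : ℤ) : ℚ) = ((i : ℚ)) := by norm_num
      rw [this] at h'
      exact absurd h' hz'A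

lemma unique_small {T T1 T2 : FareyTriangle} (h1 : fareyTree.Adj T T1) (h2 : fareyTree.Adj T T2)
    (m1 : mu T1 ≤ mu T) (m2 : mu T2 ≤ mu T) : T1 = T2 := by
  by_cases hn : none ∈ T.verts
  · obtain ⟨i, rfl⟩ := std_of_mem_none hn
    rcases small_adj_std h1 m1 with ⟨hi, e1⟩ | ⟨hi, e1⟩ <;>
      rcases small_adj_std h2 m2 with ⟨hj, e2⟩ | ⟨hj, e2⟩ <;>
      first
        | omega
        | (rw [e1, e2])
  · obtain ⟨x, y, hxy, hx, hy, hT⟩ := finite_decomp hn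
    have e1 := small_adj_fin hxy hx hy hT h1 m1
    have e2 := small_adj_fin hxy hx hy hT h2 m2
    ext1
    rw [e1, e2]

lemma exists_smaller {T : FareyTriangle} (h0 : T ≠ stdTriangle 0) (h1 : T ≠ stdTriangle (-1)) :
    ∃ T', fareyTree.Adj T T' ∧ mu T' < mu T := by
  by_cases hn : none ∈ T.verts
  · obtain ⟨i, rfl⟩ := std_of_mem_none hn
    have hi0 : i ≠ 0 := fun h => h0 (by rw [h])
    have hi1 : i ≠ -1 := fun h => h1 (by rw [h])
    rcases lt_or_ge i 0 with hi | hi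
    · refine ⟨stdTriangle (i + 1), adj_std_succ i, ?_⟩
      rw [mu_std, mu_std]
      omega
    · refine ⟨stdTriangle (i - 1), ?_, ?_⟩
      · have := adj_std_succ (i - 1)
        rw [show i - 1 + 1 = i from by ring] at this
        exact this.symm
      · rw [mu_std, mu_std]
        omega
  · obtain ⟨x, y, hxy, hx, hy, hT⟩ := finite_decomp hn
    refine ⟨tri x y (mdif x y) hxy (neighbor_symm' (mdif_neighbor_left hxy))
      (neighbor_symm' (mdif_neighbor_right hxy)), ?_, ?_⟩
    · exact adj_of_verts hT rfl hxy.ne (med_ne_left hxy) (med_ne_right hxy)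
        (mdif_ne_left hxy hx hy) (mdif_ne_right hxy hx hy) (med_ne_mdif hxy)
    · rw [mu_verts hT hxy.ne (med_ne_left hxy).symm (med_ne_right hxy).symm,
        mu_verts (rfl : (tri x y (mdif x y) _ _ _).verts = {x, y, mdif x y}) hxy.ne
          (mdif_ne_left hxy hx hy).symm (mdif_ne_right hxy hx hy).symm]
      have := fwt_mdif_lt_med hxy hx hy
      omega

lemma reach_root (T : FareyTriangle) : fareyTree.Reachable T (stdTriangle 0) := by
  have main : ∀ n (T : FareyTriangle), mu T ≤ n → fareyTree.Reachable T (stdTriangle 0) := by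
    intro n
    induction n with
    | zero =>
      intro T hT
      by_cases h0 : T = stdTriangle 0
      · rw [h0]
      · by_cases h1 : T = stdTriangle (-1)
        · subst h1
          have := adj_std_succ (-1)
          rw [show (-1 : ℤ) + 1 = 0 from by ring] at this
          exact this.reachable
        · obtain ⟨T', _, hlt⟩ := exists_smaller h0 h1
          omega
    | succ n ih =>
      intro T hT
      by_cases h0 : T = stdTriangle 0
      · rw [h0]
      · by_cases h1 : T = stdTriangle (-1)
        · subst h1
          have := adj_std_succ (-1)
          rw [show (-1 : ℤ) + 1 = 0 from by ring] at this
          exact this.reachable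
        · obtain ⟨T', hadj, hlt⟩ := exists_smaller h0 h1
          exact (hadj.reachable).trans (ih T' (by omega))
  exact main (mu T) T le_rfl

lemma no_cycle_at_max {w : FareyTriangle} (c : fareyTree.Walk w w) (hc : c.IsCycle)
    (hsup : ∀ x ∈ c.support, mu x ≤ mu w) : False := by
  cases c with
  | nil => simp [SimpleGraph.Walk.isCycle_def] at hc
  | @cons _ u _ h₁ p =>
    have hlen := hc.three_le_length
    rw [SimpleGraph.Walk.isCycle_def] at hc
    obtain ⟨htrail, _, _⟩ := hc
    obtain ⟨x, q, h₂, heq⟩ := SimpleGraph.Walk.exists_cons_eq_concat h₁ p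
    have hedges : s(w, u) :: p.edges = q.edges ++ [s(x, w)] := by
      have := congrArg SimpleGraph.Walk.edges heq
      rwa [SimpleGraph.Walk.edges_cons, SimpleGraph.Walk.edges_concat,
        List.concat_eq_append] at this
    have hnodup : s(w, u) ∉ p.edges := by
      have := htrail.edges_nodup
      rw [SimpleGraph.Walk.edges_cons, List.nodup_cons] at this
      exact this.1
    have hmem : s(x, w) ∈ p.edges := by
      rcases hq : q.edges with _ | ⟨e, t⟩
      · rw [hq] at hedges
        simp only [List.nil_append] at hedges
        obtain ⟨-, h2'⟩ := (List.cons.injEq _ _ _ _).mp hedges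
        have hpl := p.length_edges
        rw [h2'] at hpl
        simp only [List.length_nil] at hpl
        simp only [SimpleGraph.Walk.length_cons] at hlen
        omega
      · rw [hq, List.cons_append] at hedges
        have := (List.cons.injEq _ _ _ _).mp hedges
        rw [this.2]
        simp
    have hux : u ≠ x := by
      rintro rfl
      exact hnodup (by rwa [Sym2.eq_swap] at hmem)
    have humem : u ∈ (SimpleGraph.Walk.cons h₁ p).support := by
      rw [SimpleGraph.Walk.support_cons]
      exact List.mem_cons_of_mem _ p.start_mem_support
    have hxmem : x ∈ (SimpleGraph.Walk.cons h₁ p).support := by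
      rw [heq, SimpleGraph.Walk.concat_eq_append, SimpleGraph.Walk.mem_support_append_iff]
      exact Or.inl q.end_mem_support
    exact hux (unique_small h₁ (h₂.symm) (hsup u humem) (hsup x hxmem))

lemma farey_acyclic : fareyTree.IsAcyclic := by
  classical
  intro v c hc
  obtain ⟨w, hw, hmax⟩ := Finset.exists_max_image c.support.toFinset mu
    ⟨v, List.mem_toFinset.mpr c.start_mem_support⟩
  rw [List.mem_toFinset] at hw
  have hc' := hc.rotate hw
  apply no_cycle_at_max (c.rotate w hw) hc'
  intro x hx
  have hrot := SimpleGraph.Walk.support_rotate c w hw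
  rw [SimpleGraph.Walk.support_eq_cons] at hx
  rcases List.mem_cons.mp hx with rfl | hx'
  · exact le_rfl
  · apply hmax
    rw [List.mem_toFinset]
    have : x ∈ c.support.tail := hrot.mem_iff.mp hx'
    rw [SimpleGraph.Walk.support_eq_cons c]
    exact List.mem_cons_of_mem _ this

theorem fareyTree_isTree :
    fareyTree.Connected ∧ fareyTree.IsAcyclic ∧
      ∀ T T' : FareyTriangle, ∃! p : fareyTree.Walk T T', p.IsPath := by
  have hconn : fareyTree.Connected := by
    rw [SimpleGraph.connected_iff]
    exact ⟨fun T T' => (reach_root T).trans (reach_root T').symm, ⟨stdTriangle 0⟩⟩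
  have htree : fareyTree.IsTree := (SimpleGraph.isTree_iff fareyTree).mpr ⟨hconn, farey_acyclic⟩
  exact ⟨hconn, farey_acyclic, htree.existsUnique_path⟩
end

section
/- For every integer i ≥ 0, the distance in the Farey tree Σ between the triangles △^{(i)} and △^{(0)} equals i, i.e. d(△^{(i)}, △^{(0)}) = i. -/
/-! ### Auxiliary machinery for the distance theorem -/

lemma neighbor_abs_sub_le {r q : ℚ} (h : FareyNeighbor (some r) (some q)) : |r - q| ≤ 1 := by
  have h' : |r.num * (q.den : ℤ) - (r.den : ℤ) * q.num| = 1 := h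
  have hrd : (0:ℚ) < (r.den : ℚ) := by exact_mod_cast r.pos
  have hqd : (0:ℚ) < (q.den : ℚ) := by exact_mod_cast q.pos
  have key : r - q = ((r.num * (q.den:ℤ) - (r.den:ℤ) * q.num : ℤ) : ℚ) / ((r.den : ℚ) * (q.den : ℚ)) := by
    conv_lhs => rw [← Rat.num_div_den r, ← Rat.num_div_den q]
    rw [div_sub_div _ _ (ne_of_gt hrd) (ne_of_gt hqd)]
    push_cast
    ring_nf
  rw [key, abs_div, abs_of_pos (by positivity : (0:ℚ) < (r.den:ℚ)*(q.den:ℚ))]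
  have h2 : |((r.num * (q.den:ℤ) - (r.den:ℤ) * q.num : ℤ) : ℚ)| = 1 := by
    rw [← Int.cast_abs, h']; norm_num
  rw [h2, div_le_one (by positivity)]
  have h3 : (1:ℚ) ≤ (r.den : ℚ) := by exact_mod_cast r.pos
  have h4 : (1:ℚ) ≤ (q.den : ℚ) := by exact_mod_cast q.pos
  nlinarith

/-- The finite (rational) vertices of a Farey triangle. -/
def fverts (T : FareyTriangle) : Finset ℚ :=
  T.verts.filterMap id (by
    rintro a a' b ha ha'
    simp only [id_eq, Option.mem_def] at ha ha'
    rw [ha, ha'])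

lemma mem_fverts {T : FareyTriangle} {q : ℚ} : q ∈ fverts T ↔ some q ∈ T.verts := by
  simp [fverts, Finset.mem_filterMap, Option.mem_def, eq_comm]

lemma fverts_nonempty (T : FareyTriangle) : (fverts T).Nonempty := by
  by_contra hemp
  have hsub : T.verts ⊆ {none} := by
    intro v hv
    rcases v with _ | q
    · simp
    · exact absurd (⟨q, mem_fverts.mpr hv⟩ : (fverts T).Nonempty) hemp
  have := Finset.card_le_card hsub
  rw [T.card_eq] at this
  simp at this

/-- The ceiling of the smallest finite vertex of a Farey triangle. -/
def fval (T : FareyTriangle) : ℤ := ⌈(fverts T).min' (fverts_nonempty T)⌉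

lemma fval_bounds {T : FareyTriangle} {t : ℚ} (ht : some t ∈ T.verts) :
    ⌈t⌉ - 1 ≤ fval T ∧ fval T ≤ ⌈t⌉ := by
  have hupper : (fverts T).min' (fverts_nonempty T) ≤ t :=
    Finset.min'_le _ _ (mem_fverts.mpr ht)
  have hlower : t - 1 ≤ (fverts T).min' (fverts_nonempty T) := by
    apply Finset.le_min'
    intro q hq
    rcases eq_or_ne q t with rfl | hne
    · linarith
    · have hnb := T.neighbors _ ht _ (mem_fverts.mp hq) (by simpa using (Ne.symm hne))
      have := neighbor_abs_sub_le hnb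
      rw [abs_le] at this
      linarith
  constructor
  · have hc : ⌈t - 1⌉ = ⌈t⌉ - 1 := by exact_mod_cast Int.ceil_sub_intCast t 1
    calc ⌈t⌉ - 1 = ⌈t - 1⌉ := hc.symm
    _ ≤ fval T := Int.ceil_le_ceil hlower
  · exact Int.ceil_le_ceil hupper

/-- Any two adjacent Farey triangles share a finite vertex. -/
lemma shared_finite {T T' : FareyTriangle} (h : fareyTree.Adj T T') :
    ∃ t : ℚ, some t ∈ T.verts ∧ some t ∈ T'.verts := by
  have hcard : (T.verts ∩ T'.verts).card = 2 := h
  by_contra hno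
  push_neg at hno
  have hsub : T.verts ∩ T'.verts ⊆ {none} := by
    intro v hv
    rcases v with _ | q
    · simp
    · rw [Finset.mem_inter] at hv
      exact absurd hv.2 (hno q hv.1)
  have := Finset.card_le_card hsub
  rw [hcard] at this
  simp at this

lemma fval_lipschitz {T T' : FareyTriangle} (h : fareyTree.Adj T T') :
    |fval T - fval T'| ≤ 1 := by
  obtain ⟨t, ht, ht'⟩ := shared_finite h
  obtain ⟨h1, h2⟩ := fval_bounds ht
  obtain ⟨h3, h4⟩ := fval_bounds ht'
  rw [abs_le]
  omega

lemma abs_fval_sub_le_length {T T' : FareyTriangle} (W : fareyTree.Walk T T') :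
    |fval T - fval T'| ≤ (W.length : ℤ) := by
  induction W with
  | nil => simp
  | cons hadj p ih =>
    rename_i u v w
    have h1 := fval_lipschitz hadj
    calc |fval u - fval w| ≤ |fval u - fval v| + |fval v - fval w| := abs_sub_le _ _ _
    _ ≤ 1 + (p.length : ℤ) := by omega
    _ = ((SimpleGraph.Walk.cons hadj p).length : ℤ) := by
        rw [SimpleGraph.Walk.length_cons]; push_cast; ring

lemma verts_stdTriangle (i : ℤ) :
    (stdTriangle i).verts = {some (i : ℚ), some ((i + 1 : ℤ) : ℚ), none} := rfl

lemma fval_stdTriangle (i : ℤ) : fval (stdTriangle i) = i := by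
  have hfv : fverts (stdTriangle i) = {(i : ℚ), ((i + 1 : ℤ) : ℚ)} := by
    ext q
    rw [mem_fverts, verts_stdTriangle]
    simp
  have hmin : (fverts (stdTriangle i)).min' (fverts_nonempty _) = (i : ℚ) := by
    apply le_antisymm
    · apply Finset.min'_le
      rw [hfv]; simp
    · apply Finset.le_min'
      intro q hq
      rw [hfv] at hq
      rcases Finset.mem_insert.mp hq with rfl | hq
      · exact le_refl _
      · rw [Finset.mem_singleton] at hq
        subst hq
        push_cast
        linarith
  simp only [fval]
  rw [hmin, Int.ceil_intCast]

lemma adj_stdTriangle (i : ℤ) : fareyTree.Adj (stdTriangle (i + 1)) (stdTriangle i) := by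
  show ((stdTriangle (i+1)).verts ∩ (stdTriangle i).verts).card = 2
  have hinter : (stdTriangle (i+1)).verts ∩ (stdTriangle i).verts
      = {some ((i + 1 : ℤ) : ℚ), none} := by
    ext v
    rw [verts_stdTriangle, verts_stdTriangle, Finset.mem_inter]
    simp only [Finset.mem_insert, Finset.mem_singleton]
    constructor
    · rintro ⟨h1, h2⟩
      rcases h1 with rfl | rfl | rfl
      · exact Or.inl rfl
      · exfalso
        rcases h2 with h | h | h
        · rw [Option.some.injEq] at h
          have : (i + 1 + 1 : ℤ) = i := by exact_mod_cast h
          omega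
        · rw [Option.some.injEq] at h
          have : (i + 1 + 1 : ℤ) = i + 1 := by exact_mod_cast h
          omega
        · exact nomatch h
      · exact Or.inr rfl
    · rintro (rfl | rfl)
      · exact ⟨Or.inl rfl, Or.inr (Or.inl rfl)⟩
      · exact ⟨Or.inr (Or.inr rfl), Or.inr (Or.inr rfl)⟩
  rw [hinter]
  rw [Finset.card_insert_of_notMem (by simp), Finset.card_singleton]

/-- An explicit walk of length `i` from `△⁽ⁱ⁾` to `△⁽⁰⁾`. -/
def stdWalk : (i : ℕ) → fareyTree.Walk (stdTriangle (i : ℤ)) (stdTriangle 0)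
  | 0 => SimpleGraph.Walk.nil
  | (n + 1) => SimpleGraph.Walk.cons
      (by
        have h := adj_stdTriangle (n : ℤ)
        have he : ((n : ℤ) + 1) = ((n + 1 : ℕ) : ℤ) := by push_cast; ring
        rwa [he] at h)
      (stdWalk n)

lemma stdWalk_length (i : ℕ) : (stdWalk i).length = i := by
  induction i with
  | zero => rfl
  | succ n ih => simp [stdWalk, ih]

theorem dist_stdTriangle (i : ℕ) :
    fareyTree.dist (stdTriangle (i : ℤ)) (stdTriangle 0) = i := by
  have hle : fareyTree.dist (stdTriangle (i : ℤ)) (stdTriangle 0) ≤ i := by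
    have := SimpleGraph.dist_le (stdWalk i)
    rwa [stdWalk_length] at this
  have hreach : fareyTree.Reachable (stdTriangle (i : ℤ)) (stdTriangle 0) := ⟨stdWalk i⟩
  obtain ⟨W, hW⟩ := hreach.exists_walk_length_eq_dist
  have hlb := abs_fval_sub_le_length W
  rw [hW, fval_stdTriangle, fval_stdTriangle] at hlb
  simp only [sub_zero] at hlb
  rw [abs_of_nonneg (by positivity : (0:ℤ) ≤ (i:ℤ))] at hlb
  omega
end

section
/- Let p and q be relatively prime integers with p ≥ 1, q ≥ 1, and p/q ≠ 1. Let △_m be the Farey triangle containing p/q that is closest in the Farey tree Σ to △^{(0)}. Then among the three triangles adjacent to △_m in Σ there is a unique one, △_V, that does not contain p/q as a vertex, and it satisfies d(△_V, △^{(0)}) = S(p,q) − 2. -/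
theorem S_zero (p : ℕ) : S p 0 = 0 := by rw [S]; simp
theorem S_rec (p : ℕ) {q : ℕ} (h : q ≠ 0) : S p q = p / q + S q (p % q) := by
  rw [S]; simp [h]

theorem S_R1 (p : ℕ) {q : ℕ} (h : q ≠ 0) : S (p + q) q = S p q + 1 := by
  rw [S_rec _ h, S_rec _ h, Nat.add_div_right _ (Nat.pos_of_ne_zero h), Nat.add_mod_right]
  omega

theorem S_R2 {p q : ℕ} (h : p < q) : S p q = S q p := by
  rw [S_rec _ (by omega : q ≠ 0), Nat.div_eq_of_lt h, Nat.mod_eq_of_lt h, Nat.zero_add]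

theorem S_n1 (n : ℕ) : S n 1 = n := by
  rw [S_rec _ one_ne_zero]; simp [Nat.mod_one, S_zero]

theorem S_1n {n : ℕ} (h : 1 ≤ n) : S 1 n = n := by
  rcases Nat.eq_or_lt_of_le h with h1 | h1
  · rw [← h1]; exact S_n1 1
  · rw [S_R2 h1, S_n1]

theorem S_succ_self {k : ℕ} (h : 1 ≤ k) : S k (k + 1) = k + 1 := by
  rw [S_R2 (by omega)]
  have : k + 1 = 1 + k := by omega
  rw [this, S_R1 _ (by omega), S_1n h]; omega

theorem S_ge_div (p : ℕ) {q : ℕ} (h : q ≠ 0) : p / q ≤ S p q := by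
  rw [S_rec _ h]; omega

theorem S_01 : S 0 1 = 0 := by rw [S_rec _ one_ne_zero]; simp [S_zero]

theorem S_J' : ∀ (n a b p q : ℕ), a + b + p + q ≤ n → p * b = a * q + 1 →
    S (a + p) (b + q) = max (S a b) (S p q) + 1 := by
  intro n
  induction n with
  | zero =>
    intro a b p q hn h
    have : p = 0 := by omega
    simp [this] at h
  | succ n IH =>
    intro a b p q hn h
    have hb : 1 ≤ b := by
      rcases Nat.eq_zero_or_pos b with h0 | h0
      · simp [h0] at h
      · exact h0
    have hp : 1 ≤ p := by
      rcases Nat.eq_zero_or_pos p with h0 | h0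
      · simp [h0] at h
      · exact h0
    rcases Nat.eq_zero_or_pos q with hq | hq
    · -- q = 0
      subst hq
      have hp1 : p = 1 ∧ b = 1 := by
        have h1 : p ≤ 1 := Nat.le_of_dvd one_pos ⟨b, (by omega : p * b = 1).symm⟩
        have h2 : b ≤ 1 := Nat.le_of_dvd one_pos ⟨p, by rw [Nat.mul_comm]; omega⟩
        omega
      obtain ⟨rfl, rfl⟩ := hp1
      simp [S_n1, S_zero]
    rcases Nat.eq_zero_or_pos a with ha | ha
    · -- a = 0
      subst ha
      have hp1 : p = 1 ∧ b = 1 := by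
        have h1 : p ≤ 1 := Nat.le_of_dvd one_pos ⟨b, (by omega : p * b = 1).symm⟩
        have h2 : b ≤ 1 := Nat.le_of_dvd one_pos ⟨p, by rw [Nat.mul_comm]; omega⟩
        omega
      obtain ⟨rfl, rfl⟩ := hp1
      rw [S_1n (by omega), S_01, S_1n hq]
      simp [Nat.max_eq_right (Nat.zero_le q)]
      omega
    -- now a ≥ 1, q ≥ 1, b ≥ 1, p ≥ 1
    rcases le_or_gt b a with hba | hab
    · -- b ≤ a, deduce q < p
      have hqp : q < p := by
        have h1 : q * b ≤ q * a := Nat.mul_le_mul_left q hba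
        have h2 : q * b < p * b := by
          calc q * b ≤ q * a := h1
          _ < a * q + 1 := by rw [Nat.mul_comm]; omega
          _ = p * b := h.symm
        exact Nat.lt_of_mul_lt_mul_right h2
      have e1 : (p - q) * b = p * b - q * b := Nat.sub_mul p q b
      have e2 : (a - b) * q = a * q - b * q := Nat.sub_mul a b q
      have hdet : (p - q) * b = (a - b) * q + 1 := by
        have hcomm : q * b = b * q := Nat.mul_comm q b
        have hbq : b * q ≤ a * q := Nat.mul_le_mul_right q hba
        omega
      have hIH := IH (a - b) b (p - q) q (by omega) hdet
      have r1 : S (a + p) (b + q) = S ((a - b) + (p - q)) (b + q) + 1 := by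
        have : a + p = ((a - b) + (p - q)) + (b + q) := by omega
        rw [this, S_R1 _ (by omega)]
      have r2 : S a b = S (a - b) b + 1 := by
        conv_lhs => rw [show a = (a - b) + b by omega]
        rw [S_R1 _ (by omega)]
      have r3 : S p q = S (p - q) q + 1 := by
        conv_lhs => rw [show p = (p - q) + q by omega]
        rw [S_R1 _ (by omega)]
      rw [r1, r2, r3, hIH, max_add_add_right]
    rcases le_or_gt q p with hqp | hpq
    · -- a < b, q ≤ p : forced q = 1, p = 1, b = a + 1
      have hq1 : q = 1 := by
        by_contra hq1
        have h2 : 2 ≤ q := by omega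
        have c1 : q * b ≤ p * b := Nat.mul_le_mul_right b hqp
        have c2 : a * q + q ≤ b * q := by
          have h3 : (a + 1) * q ≤ b * q := Nat.mul_le_mul_right q (by omega)
          have h4 : (a + 1) * q = a * q + q := by rw [Nat.add_mul]; omega
          omega
        have hcomm : q * b = b * q := Nat.mul_comm q b
        omega
      subst hq1
      have hp1 : p = 1 := by
        by_contra hp1
        have h2 : 2 ≤ p := by
          omega
        have c1 : 2 * b ≤ p * b := Nat.mul_le_mul_right b h2
        omega
      subst hp1
      have hba : b = a + 1 := by omega
      subst hba
      have r2 : S a (a + 1) = a + 1 := by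
        rw [S_R2 (by omega)]
        conv_lhs => rw [show a + 1 = 1 + a by omega]
        rw [S_R1 _ (by omega), S_1n ha]
      rw [r2, S_n1, S_succ_self (show 1 ≤ a + 1 by omega),
        Nat.max_eq_left (by omega : 1 ≤ a + 1)]
    · -- a < b, p < q : invert
      have hdet : (b - a) * p = (q - p) * a + 1 := by
        have e1 : (b - a) * p = b * p - a * p := Nat.sub_mul b a p
        have e2 : (q - p) * a = q * a - p * a := Nat.sub_mul q p a
        have hc1 : b * p = p * b := Nat.mul_comm b p
        have hc2 : q * a = a * q := Nat.mul_comm q a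
        have hc3 : a * p = p * a := Nat.mul_comm a p
        have : p * a ≤ a * q := by
          calc p * a ≤ q * a := Nat.mul_le_mul_right a (by omega)
          _ = a * q := Nat.mul_comm q a
        omega
      have hIH := IH (q - p) p (b - a) a (by omega) hdet
      have r1 : S (a + p) (b + q) = S ((q - p) + (b - a)) (p + a) + 1 := by
        rw [S_R2 (by omega : a + p < b + q)]
        have : b + q = ((q - p) + (b - a)) + (a + p) := by omega
        rw [this]
        rw [S_R1 _ (by omega)]
        have : a + p = p + a := by omega
        rw [this]
      have r2 : S a b = S (b - a) a + 1 := by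
        rw [S_R2 hab]
        conv_lhs => rw [show b = (b - a) + a by omega]
        rw [S_R1 _ (by omega)]
      have r3 : S p q = S (q - p) p + 1 := by
        rw [S_R2 hpq]
        conv_lhs => rw [show q = (q - p) + p by omega]
        rw [S_R1 _ (by omega)]
      rw [r1, r2, r3, hIH, max_add_add_right]
      omega

theorem S_J {a b p q : ℕ} (h : p * b = a * q + 1) :
    S (a + p) (b + q) = max (S a b) (S p q) + 1 :=
  S_J' (a + b + p + q) a b p q le_rfl h

theorem S_eq_zero {a b : ℕ} (hcop : Nat.gcd a b = 1) (hS : S a b = 0) :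
    (a = 0 ∧ b = 1) ∨ (a = 1 ∧ b = 0) := by
  rcases Nat.eq_zero_or_pos b with hb | hb
  · subst hb
    right
    refine ⟨?_, rfl⟩
    simpa using hcop
  · left
    have hb0 : b ≠ 0 := by omega
    rw [S_rec _ hb0] at hS
    have h2 := Nat.add_eq_zero.mp hS
    have hrest : S b (a % b) = 0 := h2.2
    have hab : a < b := by
      by_contra hge
      push_neg at hge
      have h1 : 1 ≤ a / b := (Nat.one_le_div_iff hb).mpr hge
      rw [h2.1] at h1
      exact Nat.not_succ_le_zero 0 h1
    rw [Nat.mod_eq_of_lt hab] at hrest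
    rcases Nat.eq_zero_or_pos a with ha | ha
    · subst ha
      simp at hcop
      exact ⟨rfl, hcop⟩
    · exfalso
      rw [S_rec _ (by omega : a ≠ 0)] at hrest
      have h2 := Nat.add_eq_zero.mp hrest
      have h1 : 1 ≤ b / a := (Nat.one_le_div_iff ha).mpr (by omega)
      rw [h2.1] at h1
      exact Nat.not_succ_le_zero 0 h1

namespace FTX

/-- determinant of two integer vectors -/
def det (X Y : ℤ × ℤ) : ℤ := X.1 * Y.2 - X.2 * Y.1

/-- canonical representatives of Farey vertices -/
def valid (X : ℤ × ℤ) : Prop := (0 < X.2 ∧ Int.gcd X.1 X.2 = 1) ∨ X = (1, 0)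

/-- the Farey vertex of a vector -/
def vtx (X : ℤ × ℤ) : FareyVertex := if X.2 = 0 then none else some ((X.1 : ℚ) / (X.2 : ℚ))

/-- the canonical vector of a Farey vertex -/
def vec (v : FareyVertex) : ℤ × ℤ := (fnum v, fden v)

lemma det_swap (X Y : ℤ × ℤ) : det Y X = - det X Y := by simp [det]; ring

lemma det_self (X : ℤ × ℤ) : det X X = 0 := by simp [det]; ring

lemma vec_valid (v : FareyVertex) : valid (vec v) := by
  cases v with
  | none => right; rfl
  | some r =>
    left
    constructor
    · show (0:ℤ) < (r.den : ℤ)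
      exact_mod_cast r.pos
    · show Int.gcd (r.num) ((r.den : ℤ)) = 1
      have := r.reduced
      simp only [Int.gcd, Int.natAbs_natCast]
      exact this

lemma vec_vtx {X : ℤ × ℤ} (h : valid X) : vec (vtx X) = X := by
  rcases h with ⟨h2, hg⟩ | rfl
  · have hne : X.2 ≠ 0 := by omega
    simp only [vtx, if_neg hne, vec, fnum, fden]
    have hcop : Nat.Coprime X.1.natAbs X.2.natAbs := by
      rwa [Int.gcd] at hg
    have h1 := Rat.num_div_eq_of_coprime h2 hcop
    have h2' := Rat.den_div_eq_of_coprime h2 hcop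
    exact Prod.ext h1 h2'
  · simp [vtx, vec, fnum, fden]

lemma vtx_vec (v : FareyVertex) : vtx (vec v) = v := by
  cases v with
  | none => simp [vtx, vec, fnum, fden]
  | some r =>
    have hne : ((r.den : ℤ)) ≠ 0 := by exact_mod_cast r.den_nz
    show vtx (r.num, (r.den : ℤ)) = some r
    simp only [vtx, if_neg hne]
    congr 1
    push_cast
    exact r.num_div_den

lemma vec_inj {u v : FareyVertex} (h : vec u = vec v) : u = v := by
  rw [← vtx_vec u, ← vtx_vec v, h]

lemma vtx_inj {X Y : ℤ × ℤ} (hX : valid X) (hY : valid Y) (h : vtx X = vtx Y) : X = Y := by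
  rw [← vec_vtx hX, ← vec_vtx hY, h]

lemma vec_snd_nonneg (v : FareyVertex) : 0 ≤ (vec v).2 := by
  cases v with
  | none => exact le_refl 0
  | some r =>
    show (0:ℤ) ≤ (r.den : ℤ)
    exact_mod_cast Nat.zero_le _

lemma vec_ne_zero (v : FareyVertex) : vec v ≠ (0, 0) := by
  rcases vec_valid v with ⟨h2, _⟩ | h
  · intro heq
    rw [heq] at h2
    exact lt_irrefl 0 h2
  · rw [h]
    intro heq
    have : (1 : ℤ) = 0 := congrArg Prod.fst heq
    exact one_ne_zero this

lemma fden_eq_zero {v : FareyVertex} (h : fden v = 0) : v = none := by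
  cases v with
  | none => rfl
  | some r =>
    exfalso
    apply r.den_nz
    have h2 : ((r.den : ℤ)) = 0 := h
    exact_mod_cast h2

lemma neighbor_iff (x y : FareyVertex) : FareyNeighbor x y ↔ |det (vec x) (vec y)| = 1 :=
  Iff.rfl

lemma detid1 (X Y Z : ℤ × ℤ) : det X Y * Z.1 = det X Z * Y.1 - det Y Z * X.1 := by
  simp [det]; ring

lemma detid2 (X Y Z : ℤ × ℤ) : det X Y * Z.2 = det X Z * Y.2 - det Y Z * X.2 := by
  simp [det]; ring

lemma abs_eq_one {a : ℤ} (h : |a| = 1) : a = 1 ∨ a = -1 := by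
  rcases abs_eq (by norm_num : (0:ℤ) ≤ 1) |>.mp h with h | h
  · exact Or.inl h
  · exact Or.inr h

lemma third {X Y Z : ℤ × ℤ} (hXY : det X Y = 1) (h1 : |det X Z| = 1) (h2 : |det Y Z| = 1) :
    Z = X + Y ∨ Z = -(X + Y) ∨ Z = X - Y ∨ Z = Y - X := by
  have e1 := detid1 X Y Z
  have e2 := detid2 X Y Z
  rw [hXY, one_mul] at e1 e2
  rcases abs_eq_one h1 with ha | ha <;> rcases abs_eq_one h2 with hb | hb <;>
    rw [ha, hb] at e1 e2
  · right; right; right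
    exact Prod.ext (by simpa using e1) (by simpa using e2)
  · left
    refine Prod.ext ?_ ?_ <;> simp only [Prod.fst_add, Prod.snd_add] <;> omega
  · right; left
    refine Prod.ext ?_ ?_ <;>
      simp only [Prod.fst_neg, Prod.snd_neg, Prod.fst_add, Prod.snd_add] <;> omega
  · right; right; left
    refine Prod.ext ?_ ?_ <;> simp only [Prod.fst_sub, Prod.snd_sub] <;> omega

end FTX

namespace FTX

lemma verts_eq_three (T : FareyTriangle) :
    ∃ a b c, a ≠ b ∧ a ≠ c ∧ b ≠ c ∧ T.verts = {a, b, c} :=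
  Finset.card_eq_three.mp T.card_eq

lemma decomp_of_sum (T : FareyTriangle) (a b c : FareyVertex)
    (hT : T.verts = {a, b, c}) (hab : a ≠ b) (hac : a ≠ c) (hbc : b ≠ c)
    (hsum : vec c = vec a + vec b) :
    ∃ x ∈ T.verts, ∃ y ∈ T.verts, ∃ m ∈ T.verts, x ≠ y ∧ m ≠ x ∧ m ≠ y ∧
      det (vec x) (vec y) = 1 ∧ vec m = vec x + vec y ∧ T.verts = {x, y, m} := by
  have hma : a ∈ T.verts := by rw [hT]; simp
  have hmb : b ∈ T.verts := by rw [hT]; simp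
  have hmc : c ∈ T.verts := by rw [hT]; simp
  have hne := T.neighbors a hma b hmb hab
  rw [neighbor_iff] at hne
  rcases abs_eq_one hne with hd | hd
  · exact ⟨a, hma, b, hmb, c, hmc, hab, Ne.symm hac, Ne.symm hbc, hd, hsum, hT⟩
  · refine ⟨b, hmb, a, hma, c, hmc, Ne.symm hab, Ne.symm hbc, Ne.symm hac, ?_, ?_, ?_⟩
    · rw [det_swap]; omega
    · rw [hsum, add_comm]
    · rw [hT]; ext v; simp; tauto

lemma vec_add_ne_zero (u v : FareyVertex) : vec u + vec v ≠ 0 := by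
  intro h
  have h2 : (vec u).2 + (vec v).2 = 0 := by
    have := congrArg Prod.snd h; simpa using this
  have hu2 := vec_snd_nonneg u
  have hv2 := vec_snd_nonneg v
  have hu0 : fden u = 0 := by
    show (vec u).2 = 0; omega
  have hv0 : fden v = 0 := by
    show (vec v).2 = 0; omega
  rw [fden_eq_zero hu0, fden_eq_zero hv0] at h
  have h1 : (vec (none : FareyVertex)).1 + (vec (none : FareyVertex)).1 = 0 := by
    have := congrArg Prod.fst h; simpa using this
  simp [vec, fnum] at h1

lemma exists_decomp (T : FareyTriangle) :
    ∃ x ∈ T.verts, ∃ y ∈ T.verts, ∃ m ∈ T.verts, x ≠ y ∧ m ≠ x ∧ m ≠ y ∧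
      det (vec x) (vec y) = 1 ∧ vec m = vec x + vec y ∧ T.verts = {x, y, m} := by
  obtain ⟨a, b, c, hab, hac, hbc, hT⟩ := verts_eq_three T
  have hma : a ∈ T.verts := by rw [hT]; simp
  have hmb : b ∈ T.verts := by rw [hT]; simp
  have hmc : c ∈ T.verts := by rw [hT]; simp
  have dab := T.neighbors a hma b hmb hab
  have dac := T.neighbors a hma c hmc hac
  have dbc := T.neighbors b hmb c hmc hbc
  rw [neighbor_iff] at dab dac dbc
  have e1 := detid1 (vec a) (vec b) (vec c)
  have e2 := detid2 (vec a) (vec b) (vec c)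
  have hTb : T.verts = {b, c, a} := by rw [hT]; ext v; simp; tauto
  have hTc : T.verts = {a, c, b} := by rw [hT]; ext v; simp; tauto
  have sna := vec_snd_nonneg a
  have snb := vec_snd_nonneg b
  have snc := vec_snd_nonneg c
  rcases abs_eq_one dab with h1 | h1 <;> rcases abs_eq_one dac with h2 | h2 <;>
    rcases abs_eq_one dbc with h3 | h3 <;> rw [h1, h2, h3] at e1 e2 <;>
    [skip; skip; skip; skip; skip; skip; skip; skip] <;>
    first
      | exact decomp_of_sum T a b c hT hab hac hbc
          (Prod.ext (by simp only [Prod.fst_add]; omega) (by simp only [Prod.snd_add]; omega))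
      | exact decomp_of_sum T b c a hTb hbc (Ne.symm hab) (Ne.symm hac)
          (Prod.ext (by simp only [Prod.fst_add]; omega) (by simp only [Prod.snd_add]; omega))
      | exact decomp_of_sum T a c b hTc hac hab (Ne.symm hbc)
          (Prod.ext (by simp only [Prod.fst_add]; omega) (by simp only [Prod.snd_add]; omega))
      | (exfalso
         apply hab
         have hza : fden a = 0 := by show (vec a).2 = 0; omega
         have hzb : fden b = 0 := by show (vec b).2 = 0; omega
         rw [fden_eq_zero hza, fden_eq_zero hzb])

def isMid (T : FareyTriangle) (m : FareyVertex) : Prop :=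
  m ∈ T.verts ∧ ∃ x ∈ T.verts, ∃ y ∈ T.verts,
    x ≠ y ∧ m ≠ x ∧ m ≠ y ∧ vec m = vec x + vec y

lemma exists_isMid (T : FareyTriangle) : ∃ m, isMid T m := by
  obtain ⟨x, hx, y, hy, m, hm, hxy, hmx, hmy, _, hsum, _⟩ := exists_decomp T
  exact ⟨m, hm, x, hx, y, hy, hxy, hmx, hmy, hsum⟩

lemma verts_eq_of_mem {T : FareyTriangle} {x y m : FareyVertex}
    (hx : x ∈ T.verts) (hy : y ∈ T.verts) (hm : m ∈ T.verts)
    (hxy : x ≠ y) (hmx : m ≠ x) (hmy : m ≠ y) : T.verts = {x, y, m} := by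
  have hsub : ({x, y, m} : Finset FareyVertex) ⊆ T.verts := by
    intro v hv
    simp only [Finset.mem_insert, Finset.mem_singleton] at hv
    rcases hv with rfl | rfl | rfl <;> assumption
  have hcard : ({x, y, m} : Finset FareyVertex).card = 3 := by
    rw [Finset.card_insert_of_notMem (by simp [hxy, Ne.symm hmx]),
      Finset.card_insert_of_notMem (by simp [Ne.symm hmy])]
    simp
  exact (Finset.eq_of_subset_of_card_le hsub (by rw [T.card_eq, hcard])).symm

lemma isMid_unique (T : FareyTriangle) {m m' : FareyVertex}
    (h : isMid T m) (h' : isMid T m') : m = m' := by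
  by_contra hne
  obtain ⟨hm, x, hx, y, hy, hxy, hmx, hmy, hsum⟩ := h
  obtain ⟨hm', x', hx', y', hy', hxy', hmx', hmy', hsum'⟩ := h'
  have hTv := verts_eq_of_mem hx hy hm hxy hmx hmy
  have hTv' := verts_eq_of_mem hx' hy' hm' hxy' hmx' hmy'
  have hm'mem : m' ∈ ({x, y, m} : Finset FareyVertex) := by rw [← hTv]; exact hm'
  have hmmem : m ∈ ({x', y', m'} : Finset FareyVertex) := by rw [← hTv']; exact hm
  simp only [Finset.mem_insert, Finset.mem_singleton] at hm'mem hmmem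
  have hmm' : ¬ (m = m') := hne
  -- in every case derive an impossible vector identity
  rcases hm'mem with rfl | rfl | rfl
  · -- m' = x
    rcases hmmem with rfl | rfl | rfl
    · -- m = x' : vec m = vec m' + vec y, vec m' = vec m + vec y'
      apply vec_add_ne_zero y y'
      have f1 := congrArg Prod.fst hsum
      have f2 := congrArg Prod.fst hsum'
      have g1 := congrArg Prod.snd hsum
      have g2 := congrArg Prod.snd hsum'
      simp only [Prod.fst_add, Prod.snd_add] at f1 f2 g1 g2
      refine Prod.ext ?_ ?_ <;> simp only [Prod.fst_add, Prod.snd_add, Prod.fst_zero, Prod.snd_zero] <;> omega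
    · -- m = y' : vec m' = vec x' + vec m, vec m = vec m' + vec y
      apply vec_add_ne_zero x' y
      have f1 := congrArg Prod.fst hsum
      have f2 := congrArg Prod.fst hsum'
      have g1 := congrArg Prod.snd hsum
      have g2 := congrArg Prod.snd hsum'
      simp only [Prod.fst_add, Prod.snd_add] at f1 f2 g1 g2
      refine Prod.ext ?_ ?_ <;> simp only [Prod.fst_add, Prod.snd_add, Prod.fst_zero, Prod.snd_zero] <;> omega
    · exact hne rfl
  · -- m' = y
    rcases hmmem with rfl | rfl | rfl
    · -- m = x'
      apply vec_add_ne_zero x y'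
      have f1 := congrArg Prod.fst hsum
      have f2 := congrArg Prod.fst hsum'
      have g1 := congrArg Prod.snd hsum
      have g2 := congrArg Prod.snd hsum'
      simp only [Prod.fst_add, Prod.snd_add] at f1 f2 g1 g2
      refine Prod.ext ?_ ?_ <;> simp only [Prod.fst_add, Prod.snd_add, Prod.fst_zero, Prod.snd_zero] <;> omega
    · -- m = y'
      apply vec_add_ne_zero x' x
      have f1 := congrArg Prod.fst hsum
      have f2 := congrArg Prod.fst hsum'
      have g1 := congrArg Prod.snd hsum
      have g2 := congrArg Prod.snd hsum'
      simp only [Prod.fst_add, Prod.snd_add] at f1 f2 g1 g2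
      refine Prod.ext ?_ ?_ <;> simp only [Prod.fst_add, Prod.snd_add, Prod.fst_zero, Prod.snd_zero] <;> omega
    · exact hne rfl
  · exact hne rfl

noncomputable def mid (T : FareyTriangle) : FareyVertex := (exists_isMid T).choose

lemma mid_isMid (T : FareyTriangle) : isMid T (mid T) := (exists_isMid T).choose_spec

lemma mid_eq {T : FareyTriangle} {m : FareyVertex} (h : isMid T m) : mid T = m :=
  isMid_unique T (mid_isMid T) h

end FTX

namespace FTX

def neg (T : FareyTriangle) : Prop := ∃ v ∈ T.verts, fnum v < 0

lemma fden_nonneg (v : FareyVertex) : 0 ≤ fden v := vec_snd_nonneg v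

lemma no_straddle {u w : FareyVertex} (h : FareyNeighbor u w) (hu : fnum u < 0)
    (hw1 : 0 < fnum w) (hw2 : 0 < fden w) : False := by
  have hu2 : 0 < fden u := by
    rcases lt_or_eq_of_le (fden_nonneg u) with h2 | h2
    · exact h2
    · exfalso
      rw [fden_eq_zero h2.symm] at hu
      simp [fnum] at hu
  rw [neighbor_iff] at h
  rcases abs_eq_one h with hd | hd <;>
  · simp only [det, vec] at hd
    nlinarith [mul_pos hu2 hw1, mul_pos (by omega : 0 < -fnum u) hw2]

lemma fnum_zero_eq {v : FareyVertex} (h : fnum v = 0) : v = some (0 : ℚ) := by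
  apply vec_inj
  have hval := vec_valid v
  have : vec v = (0, 1) := by
    rcases hval with ⟨h2, hg⟩ | hv
    · have : (vec v).1 = 0 := h
      rw [this] at hg
      simp [Int.gcd] at hg
      have : (vec v).2 = 1 := by
        rcases Int.natAbs_eq (vec v).2 with he | he <;> omega
      exact Prod.ext ‹(vec v).1 = 0› this
    · exfalso
      have : fnum v = 1 := congrArg Prod.fst hv
      omega
  rw [this]
  rfl

def rOpt (v : FareyVertex) : FareyVertex := Option.map (fun x => -x) v

lemma rOpt_rOpt (v : FareyVertex) : rOpt (rOpt v) = v := by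
  cases v <;> simp [rOpt]

lemma rOpt_injective : Function.Injective rOpt := fun a b h => by
  rw [← rOpt_rOpt a, h, rOpt_rOpt]

lemma fnum_rOpt_some (r : ℚ) : fnum (rOpt (some r)) = - r.num := by
  simp [rOpt, fnum, Rat.num_neg_eq_neg_num]

lemma fden_rOpt_some (r : ℚ) : fden (rOpt (some r)) = (r.den : ℤ) := by
  simp [rOpt, fden, Rat.den_neg_eq_den]

lemma neighbor_rOpt {u v : FareyVertex} (h : FareyNeighbor u v) :
    FareyNeighbor (rOpt u) (rOpt v) := by
  cases u with
  | none =>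
    cases v with
    | none => exact h
    | some s =>
      unfold FareyNeighbor at h ⊢
      rw [show rOpt none = none from rfl, fnum_rOpt_some, fden_rOpt_some]
      unfold fnum fden at h ⊢
      rw [show (1 : ℤ) * (s.den : ℤ) - 0 * s.num = (s.den : ℤ) by ring] at h
      rw [show (1 : ℤ) * (s.den : ℤ) - 0 * (-s.num) = (s.den : ℤ) by ring]
      exact h
  | some r =>
    cases v with
    | none =>
      unfold FareyNeighbor at h ⊢
      rw [show rOpt none = none from rfl, fnum_rOpt_some, fden_rOpt_some]
      unfold fnum fden at h ⊢
      rw [show r.num * 0 - (r.den : ℤ) * 1 = -(r.den : ℤ) by ring] at h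
      rw [show (-r.num) * 0 - (r.den : ℤ) * 1 = -(r.den : ℤ) by ring]
      exact h
    | some s =>
      unfold FareyNeighbor at h ⊢
      rw [fnum_rOpt_some, fden_rOpt_some, fnum_rOpt_some, fden_rOpt_some]
      unfold fnum fden at h
      rw [show (-r.num) * (s.den : ℤ) - (r.den : ℤ) * (-s.num)
          = -(r.num * (s.den : ℤ) - (r.den : ℤ) * s.num) by ring, abs_neg]
      exact h

def reflect (T : FareyTriangle) : FareyTriangle where
  verts := T.verts.image rOpt
  card_eq := by rw [Finset.card_image_of_injective _ rOpt_injective, T.card_eq]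
  neighbors := by
    intro x hx y hy hxy
    simp only [Finset.mem_image] at hx hy
    obtain ⟨x0, hx0, rfl⟩ := hx
    obtain ⟨y0, hy0, rfl⟩ := hy
    exact neighbor_rOpt (T.neighbors _ hx0 _ hy0 (fun h => hxy (congrArg rOpt h)))

lemma reflect_verts (T : FareyTriangle) : (reflect T).verts = T.verts.image rOpt := rfl

lemma reflect_reflect (T : FareyTriangle) : reflect (reflect T) = T := by
  apply FareyTriangle.ext
  rw [reflect_verts, reflect_verts, Finset.image_image]
  have : rOpt ∘ rOpt = id := funext rOpt_rOpt
  rw [this, Finset.image_id]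

lemma mem_reflect {v : FareyVertex} {T : FareyTriangle} (h : v ∈ T.verts) :
    rOpt v ∈ (reflect T).verts := by
  rw [reflect_verts]
  exact Finset.mem_image_of_mem _ h

lemma reflect_adj {T T' : FareyTriangle} (h : fareyTree.Adj T T') :
    fareyTree.Adj (reflect T) (reflect T') := by
  show ((T.verts.image rOpt) ∩ (T'.verts.image rOpt)).card = 2
  rw [← Finset.image_inter _ _ rOpt_injective,
    Finset.card_image_of_injective _ rOpt_injective]
  exact h

lemma neg_all {T : FareyTriangle} (h : neg T) :
    ∀ v ∈ T.verts, fnum v ≤ 0 ∨ fden v = 0 := by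
  obtain ⟨u, hu, hun⟩ := h
  intro v hv
  by_contra hc
  push_neg at hc
  obtain ⟨hc1, hc2⟩ := hc
  have hc1' : 0 < fnum v := by omega
  have hc2' : 0 < fden v := by
    have := fden_nonneg v
    omega
  have huv : u ≠ v := by
    intro he
    rw [he] at hun
    omega
  exact no_straddle (T.neighbors u hu v hv huv) hun hc1' hc2'

lemma not_neg_reflect {T : FareyTriangle} (h : neg T) : ¬ neg (reflect T) := by
  rintro ⟨w, hw, hwn⟩
  rw [reflect_verts] at hw
  obtain ⟨v, hv, rfl⟩ := Finset.mem_image.mp hw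
  cases v with
  | none => simp [rOpt, fnum] at hwn
  | some r =>
    rw [fnum_rOpt_some] at hwn
    have h1 : 0 < fnum (some r) := by
      show 0 < r.num
      omega
    have h2 : 0 < fden (some r) := by
      show (0:ℤ) < (r.den : ℤ)
      exact_mod_cast r.pos
    rcases neg_all h _ hv with h3 | h3
    · omega
    · exact absurd h3 (by omega)

lemma neg_reflect_of_not_neg {T : FareyTriangle} (h : ¬ neg T) : neg (reflect T) := by
  have key : ∃ v ∈ T.verts, 0 < fnum v ∧ 0 < fden v := by
    by_contra hk
    push_neg at hk
    have hprop : ∀ v ∈ T.verts, v = none ∨ v = some (0:ℚ) := by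
      intro v hv
      have h1 : ¬ fnum v < 0 := fun hlt => h ⟨v, hv, hlt⟩
      rcases lt_or_eq_of_le (fden_nonneg v) with h2 | h2
      · right
        have h3 := hk v hv
        have h4 : fnum v = 0 := by
          by_contra h5
          have h6 : 0 < fnum v := by omega
          have := h3 h6
          omega
        exact fnum_zero_eq h4
      · exact Or.inl (fden_eq_zero h2.symm)
    obtain ⟨a, b, c, hab, hac, hbc, hT⟩ := verts_eq_three T
    have hma : a ∈ T.verts := by rw [hT]; simp
    have hmb : b ∈ T.verts := by rw [hT]; simp
    have hmc : c ∈ T.verts := by rw [hT]; simp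
    rcases hprop a hma with rfl | rfl <;> rcases hprop b hmb with rfl | rfl <;>
      rcases hprop c hmc with rfl | rfl <;> simp_all
  obtain ⟨v, hv, hv1, hv2⟩ := key
  cases v with
  | none => simp [fden] at hv2
  | some r =>
    refine ⟨rOpt (some r), mem_reflect hv, ?_⟩
    rw [fnum_rOpt_some]
    have : 0 < r.num := hv1
    omega

end FTX

namespace FTX

noncomputable def S2 (X : ℤ × ℤ) : ℕ := S X.1.toNat X.2.toNat

open Classical in
noncomputable def rk (T : FareyTriangle) : ℕ :=
  if neg T then S2 (vec (mid (reflect T))) else S2 (vec (mid T)) - 1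

lemma rk_of_neg {T : FareyTriangle} (h : neg T) :
    rk T = S2 (vec (mid (reflect T))) := by rw [rk, if_pos h]

lemma rk_of_nonneg {T : FareyTriangle} (h : ¬ neg T) :
    rk T = S2 (vec (mid T)) - 1 := by rw [rk, if_neg h]

lemma S2_add {X Y : ℤ × ℤ} (hX1 : 0 ≤ X.1) (hX2 : 0 ≤ X.2) (hY1 : 0 ≤ Y.1) (hY2 : 0 ≤ Y.2)
    (h : |det X Y| = 1) : S2 (X + Y) = max (S2 X) (S2 Y) + 1 := by
  obtain ⟨a, ha⟩ := Int.eq_ofNat_of_zero_le hX1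
  obtain ⟨b, hb⟩ := Int.eq_ofNat_of_zero_le hX2
  obtain ⟨p, hp⟩ := Int.eq_ofNat_of_zero_le hY1
  obtain ⟨q, hq⟩ := Int.eq_ofNat_of_zero_le hY2
  have hS2X : S2 X = S a b := by
    simp [S2, ha, hb]
  have hS2Y : S2 Y = S p q := by
    simp [S2, hp, hq]
  have hS2XY : S2 (X + Y) = S (a + p) (b + q) := by
    simp only [S2, Prod.fst_add, Prod.snd_add, ha, hb, hp, hq]
    rw [show ((a : ℤ) + (p : ℤ)) = ((a + p : ℕ) : ℤ) by push_cast; ring,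
        show ((b : ℤ) + (q : ℤ)) = ((b + q : ℕ) : ℤ) by push_cast; ring,
        Int.toNat_natCast, Int.toNat_natCast]
  rw [hS2X, hS2Y, hS2XY]
  simp only [det, ha, hb, hp, hq] at h
  rcases abs_eq_one h with hd | hd
  · -- a * q - b * p = 1
    have hnat : a * q = p * b + 1 := by
      have : (a : ℤ) * q = p * b + 1 := by push_cast at hd ⊢; linarith
      exact_mod_cast this
    have := S_J (a := p) (b := q) (p := a) (q := b) (by linarith [hnat])
    rw [show p + a = a + p by ring, show q + b = b + q by ring, Nat.max_comm] at this
    exact this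
  · -- a * q - b * p = -1
    have hnat : p * b = a * q + 1 := by
      have : (p : ℤ) * b = a * q + 1 := by push_cast at hd ⊢; linarith
      exact_mod_cast this
    exact S_J hnat

lemma nonneg_fnum {T : FareyTriangle} (h : ¬ neg T) {v : FareyVertex} (hv : v ∈ T.verts) :
    0 ≤ fnum v := by
  by_contra hc
  exact h ⟨v, hv, by omega⟩

lemma rk_formula {T : FareyTriangle} (hn : ¬ neg T) {x y m : FareyVertex}
    (hx : x ∈ T.verts) (hy : y ∈ T.verts) (hm : m ∈ T.verts) (hxy : x ≠ y)
    (hmx : m ≠ x) (hmy : m ≠ y) (hsum : vec m = vec x + vec y) :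
    rk T = max (S2 (vec x)) (S2 (vec y)) ∧
      S2 (vec m) = max (S2 (vec x)) (S2 (vec y)) + 1 := by
  have hmid : mid T = m := mid_eq ⟨hm, x, hx, y, hy, hxy, hmx, hmy, hsum⟩
  have hdet := T.neighbors x hx y hy hxy
  rw [neighbor_iff] at hdet
  have hkey : S2 (vec m) = max (S2 (vec x)) (S2 (vec y)) + 1 := by
    rw [hsum]
    exact S2_add (nonneg_fnum hn hx) (vec_snd_nonneg x) (nonneg_fnum hn hy)
      (vec_snd_nonneg y) hdet
  refine ⟨?_, hkey⟩
  rw [rk_of_nonneg hn, hmid, hkey]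
  omega

/-- generic triangle constructor -/
def mkTriangle (u v w : FareyVertex) (huv : u ≠ v) (huw : u ≠ w) (hvw : v ≠ w)
    (h1 : FareyNeighbor u v) (h2 : FareyNeighbor u w) (h3 : FareyNeighbor v w) :
    FareyTriangle where
  verts := {u, v, w}
  card_eq := by
    rw [Finset.card_insert_of_notMem (by simp [huv, huw]),
      Finset.card_insert_of_notMem (by simp [hvw])]
    simp
  neighbors := by
    intro x hx y hy hxy
    simp only [Finset.mem_insert, Finset.mem_singleton] at hx hy
    rcases hx with rfl | rfl | rfl <;> rcases hy with rfl | rfl | rfl <;>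
      first
        | exact absurd rfl hxy
        | assumption
        | exact neighbor_symm h1
        | exact neighbor_symm h2
        | exact neighbor_symm h3

lemma neighbor_of_det {X Y : ℤ × ℤ} (hX : valid X) (hY : valid Y) (h : |det X Y| = 1) :
    FareyNeighbor (vtx X) (vtx Y) := by
  rw [neighbor_iff, vec_vtx hX, vec_vtx hY]
  exact h

lemma vtx_ne {X Y : ℤ × ℤ} (hX : valid X) (hY : valid Y) (h : X ≠ Y) : vtx X ≠ vtx Y :=
  fun he => h (vtx_inj hX hY he)

lemma valid_ne_zero {X : ℤ × ℤ} (h : valid X) : X ≠ (0, 0) := by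
  rcases h with ⟨h2, _⟩ | h
  · intro he; rw [he] at h2; exact lt_irrefl 0 h2
  · intro he; rw [he] at h; exact absurd (congrArg Prod.fst h) (by norm_num)

lemma gcd_eq_one_of_det {X Z : ℤ × ℤ} (h : |det X Z| = 1) : Int.gcd Z.1 Z.2 = 1 := by
  have h1 : (Int.gcd Z.1 Z.2 : ℤ) ∣ det X Z := by
    have d1 : (Int.gcd Z.1 Z.2 : ℤ) ∣ Z.1 := Int.gcd_dvd_left _ _
    have d2 : (Int.gcd Z.1 Z.2 : ℤ) ∣ Z.2 := Int.gcd_dvd_right _ _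
    exact dvd_sub (Dvd.dvd.mul_left d2 X.1) (Dvd.dvd.mul_left d1 X.2)
  have h2 : (Int.gcd Z.1 Z.2 : ℤ) ∣ 1 := by
    rcases abs_eq_one h with hd | hd <;> rw [hd] at h1
    · exact h1
    · exact dvd_neg.mp h1
  exact_mod_cast Int.eq_one_of_dvd_one (by positivity) h2

lemma snd_pos_add {X Y : ℤ × ℤ} (hX : valid X) (hY : valid Y) (hd : det X Y = 1) :
    0 < (X + Y).2 := by
  have hX2 := hX
  have h1 : 0 ≤ X.2 := by
    rcases hX with ⟨h, _⟩ | h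
    · omega
    · rw [h]
  have h2 : 0 ≤ Y.2 := by
    rcases hY with ⟨h, _⟩ | h
    · omega
    · rw [h]
  simp only [Prod.snd_add]
  by_contra hc
  push_neg at hc
  have hx0 : X.2 = 0 := by omega
  have hy0 : Y.2 = 0 := by omega
  rw [show X = (1,0) by rcases hX with ⟨h,_⟩|h; omega; exact h,
      show Y = (1,0) by rcases hY with ⟨h,_⟩|h; omega; exact h] at hd
  simp [det] at hd

lemma valid_add {X Y : ℤ × ℤ} (hX : valid X) (hY : valid Y) (hd : det X Y = 1) :
    valid (X + Y) := by
  left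
  refine ⟨snd_pos_add hX hY hd, ?_⟩
  apply gcd_eq_one_of_det (X := X)
  have : det X (X + Y) = det X Y := by simp [det]; ring
  rw [this, hd]
  rfl

def compv (X Y : ℤ × ℤ) : ℤ × ℤ := if 0 ≤ (X - Y).2 then X - Y else Y - X

lemma compv_cases {X Y : ℤ × ℤ} (hX : valid X) (hY : valid Y) (hd : det X Y = 1) :
    (compv X Y = X - Y ∧ X = Y + compv X Y) ∨ (compv X Y = Y - X ∧ Y = X + compv X Y) := by
  unfold compv
  split
  · left; constructor; rfl; ext <;> simp <;> ring
  · right; constructor; rfl; ext <;> simp <;> ring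

lemma valid_compv {X Y : ℤ × ℤ} (hX : valid X) (hY : valid Y) (hd : det X Y = 1) :
    valid (compv X Y) := by
  have hX2 : 0 ≤ X.2 := by
    rcases hX with ⟨h, _⟩ | h
    · omega
    · rw [h]
  have hY2 : 0 ≤ Y.2 := by
    rcases hY with ⟨h, _⟩ | h
    · omega
    · rw [h]
  have hgcd1 : |det X (X - Y)| = 1 := by
    have : det X (X - Y) = - det X Y := by simp [det]; ring
    rw [this, hd]
    norm_num
  have hgcd2 : |det X (Y - X)| = 1 := by
    have : det X (Y - X) = det X Y := by simp [det]; ring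
    rw [this, hd]
    norm_num
  unfold compv
  split
  case isTrue hle =>
    rcases lt_or_eq_of_le hle with hlt | heq
    · left
      exact ⟨hlt, gcd_eq_one_of_det hgcd1⟩
    · -- (X - Y).2 = 0, so X.2 = Y.2 and X - Y = (1,0)
      right
      have h2 : X.2 = Y.2 := by
        have : (X - Y).2 = X.2 - Y.2 := rfl
        omega
      have hXpos : 0 < X.2 := by
        by_contra hc
        push_neg at hc
        have hx0 : X.2 = 0 := by omega
        have hy0 : Y.2 = 0 := by omega
        rw [show X = (1,0) by rcases hX with ⟨h,_⟩|h; omega; exact h,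
            show Y = (1,0) by rcases hY with ⟨h,_⟩|h; omega; exact h] at hd
        simp [det] at hd
      have hd' : X.1 * Y.2 - X.2 * Y.1 = 1 := hd
      have hdd : X.2 * (X.1 - Y.1) = 1 := by
        have e : X.2 * (X.1 - Y.1) = X.1 * Y.2 - X.2 * Y.1 := by rw [← h2]; ring
        rw [e, hd']
      have hX21 : X.2 = 1 := by
        have h1 : X.2 ∣ 1 := ⟨X.1 - Y.1, hdd.symm⟩
        rcases Int.isUnit_iff.mp (isUnit_of_dvd_one h1) with h | h
        · exact h
        · omega
      have : X.1 - Y.1 = 1 := by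
        rw [hX21, one_mul] at hdd
        exact hdd
      ext
      · simp [this]
      · simp
        omega
  case isFalse hlt =>
    push_neg at hlt
    left
    constructor
    · have : (X - Y).2 = X.2 - Y.2 := rfl
      have : (Y - X).2 = Y.2 - X.2 := rfl
      omega
    · exact gcd_eq_one_of_det hgcd2

end FTX

namespace FTX

lemma vec_none : vec (none : FareyVertex) = (1, 0) := rfl

lemma vec_some_zero : vec (some (0:ℚ)) = (0, 1) := rfl

lemma vec_some_one : vec (some (1:ℚ)) = (1, 1) := rfl

lemma vec_some_negone : vec (some (-1:ℚ)) = (-1, 1) := rfl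

lemma eq_vtx_of_vec {v : FareyVertex} {X : ℤ × ℤ} (h : vec v = X) : v = vtx X := by
  rw [← h, vtx_vec]

lemma valid_gcd {X : ℤ × ℤ} (h : valid X) : Int.gcd X.1 X.2 = 1 := by
  rcases h with ⟨_, hg⟩ | h
  · exact hg
  · rw [h]; rfl

lemma valid_snd_nonneg {X : ℤ × ℤ} (h : valid X) : 0 ≤ X.2 := by
  rcases h with ⟨h2, _⟩ | h
  · omega
  · rw [h]

lemma decomp_verts (T : FareyTriangle) :
    ∃ X Y, valid X ∧ valid Y ∧ det X Y = 1 ∧ T.verts = {vtx X, vtx Y, vtx (X + Y)} := by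
  obtain ⟨x, hx, y, hy, m, hm, hxy, hmx, hmy, hdet, hsum, hTv⟩ := exists_decomp T
  refine ⟨vec x, vec y, vec_valid x, vec_valid y, hdet, ?_⟩
  rw [hTv, vtx_vec x, vtx_vec y, ← hsum, vtx_vec m]

lemma ne_of_det_one {X Y : ℤ × ℤ} (hd : det X Y = 1) : X ≠ Y := by
  intro h
  rw [h, det_self] at hd
  exact absurd hd (by norm_num)

lemma add_ne_left {X Y : ℤ × ℤ} (hY : valid Y) : X + Y ≠ X := by
  intro h
  have : Y = 0 := by
    have := congrArg (· - X) h
    simpa [add_comm, add_sub_cancel_right] using this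
  exact valid_ne_zero hY (by rw [this]; rfl)

lemma add_ne_right {X Y : ℤ × ℤ} (hX : valid X) : X + Y ≠ Y := by
  intro h
  have : X = 0 := by
    have := congrArg (· - Y) h
    simpa [add_sub_cancel_right] using this
  exact valid_ne_zero hX (by rw [this]; rfl)

lemma eq_zero_prod {Y : ℤ × ℤ} (h1 : Y.1 = 0) (h2 : Y.2 = 0) : Y = (0, 0) :=
  Prod.ext h1 h2

lemma compv_ne_left {X Y : ℤ × ℤ} (hX : valid X) (hY : valid Y) (hd : det X Y = 1) :
    compv X Y ≠ X := by
  have hd' : X.1 * Y.2 - X.2 * Y.1 = 1 := hd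
  rcases compv_cases hX hY hd with ⟨hW, _⟩ | ⟨hW, _⟩ <;> rw [hW] <;> intro h <;>
    have h1 := congrArg Prod.fst h <;> have h2 := congrArg Prod.snd h <;>
    simp only [Prod.fst_sub, Prod.snd_sub] at h1 h2
  · exact valid_ne_zero hY (eq_zero_prod (by omega) (by omega))
  · -- Y - X = X, so Y = 2X, det = 0
    have e : X.1 * Y.2 - X.2 * Y.1 = 0 := by
      rw [show Y.1 = X.1 + X.1 by omega, show Y.2 = X.2 + X.2 by omega]
      ring
    omega

lemma compv_ne_right {X Y : ℤ × ℤ} (hX : valid X) (hY : valid Y) (hd : det X Y = 1) :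
    compv X Y ≠ Y := by
  have hd' : X.1 * Y.2 - X.2 * Y.1 = 1 := hd
  rcases compv_cases hX hY hd with ⟨hW, _⟩ | ⟨hW, _⟩ <;> rw [hW] <;> intro h <;>
    have h1 := congrArg Prod.fst h <;> have h2 := congrArg Prod.snd h <;>
    simp only [Prod.fst_sub, Prod.snd_sub] at h1 h2
  · -- X - Y = Y, so X = 2Y, det = 0
    have e : X.1 * Y.2 - X.2 * Y.1 = 0 := by
      rw [show X.1 = Y.1 + Y.1 by omega, show X.2 = Y.2 + Y.2 by omega]
      ring
    omega
  · exact valid_ne_zero hX (eq_zero_prod (by omega) (by omega))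

lemma compv_ne_add {X Y : ℤ × ℤ} (hX : valid X) (hY : valid Y) (hd : det X Y = 1) :
    compv X Y ≠ X + Y := by
  rcases compv_cases hX hY hd with ⟨hW, _⟩ | ⟨hW, _⟩ <;> rw [hW] <;> intro h <;>
    have h1 := congrArg Prod.fst h <;> have h2 := congrArg Prod.snd h <;>
    simp only [Prod.fst_sub, Prod.snd_sub, Prod.fst_add, Prod.snd_add] at h1 h2
  · exact valid_ne_zero hY (eq_zero_prod (by omega) (by omega))
  · exact valid_ne_zero hX (eq_zero_prod (by omega) (by omega))

lemma edge_master {X Y : ℤ × ℤ} (hX : valid X) (hY : valid Y) (hd : det X Y = 1)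
    {T T' : FareyTriangle}
    (hT : T.verts = {vtx X, vtx Y, vtx (X + Y)})
    (hT' : T'.verts = {vtx X, vtx Y, vtx (compv X Y)})
    (hnT : ¬ neg T) (hnT' : ¬ neg T') :
    rk T = rk T' + 1 := by
  have hXY := valid_add hX hY hd
  have hW := valid_compv hX hY hd
  have hxy : vtx X ≠ vtx Y := vtx_ne hX hY (ne_of_det_one hd)
  have hmx : vtx (X + Y) ≠ vtx X := vtx_ne hXY hX (add_ne_left hY)
  have hmy : vtx (X + Y) ≠ vtx Y := vtx_ne hXY hY (add_ne_right hX)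
  have hwx : vtx (compv X Y) ≠ vtx X := vtx_ne hW hX (compv_ne_left hX hY hd)
  have hwy : vtx (compv X Y) ≠ vtx Y := vtx_ne hW hY (compv_ne_right hX hY hd)
  have memX : vtx X ∈ T.verts := by rw [hT]; simp
  have memY : vtx Y ∈ T.verts := by rw [hT]; simp
  have memM : vtx (X + Y) ∈ T.verts := by rw [hT]; simp
  have memX' : vtx X ∈ T'.verts := by rw [hT']; simp
  have memY' : vtx Y ∈ T'.verts := by rw [hT']; simp
  have memW' : vtx (compv X Y) ∈ T'.verts := by rw [hT']; simp
  obtain ⟨r1, -⟩ := rk_formula hnT memX memY memM hxy hmx hmy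
    (by simp only [vec_vtx hX, vec_vtx hY, vec_vtx hXY])
  simp only [vec_vtx hX, vec_vtx hY] at r1
  rcases compv_cases hX hY hd with ⟨hWeq, hrel⟩ | ⟨hWeq, hrel⟩
  · obtain ⟨r2, s2⟩ := rk_formula hnT' memY' memW' memX' (Ne.symm hwy) hxy (Ne.symm hwx)
      (by simp only [vec_vtx hX, vec_vtx hY, vec_vtx hW]; exact hrel)
    simp only [vec_vtx hX, vec_vtx hY, vec_vtx hW] at r2 s2
    have hle : S2 Y ≤ max (S2 Y) (S2 (compv X Y)) := le_max_left _ _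
    omega
  · obtain ⟨r2, s2⟩ := rk_formula hnT' memX' memW' memY' (Ne.symm hwx) (Ne.symm hxy)
      (Ne.symm hwy)
      (by simp only [vec_vtx hX, vec_vtx hY, vec_vtx hW]; exact hrel)
    simp only [vec_vtx hX, vec_vtx hY, vec_vtx hW] at r2 s2
    have hle : S2 X ≤ max (S2 X) (S2 (compv X Y)) := le_max_left _ _
    omega

end FTX

namespace FTX

lemma third_vertex {X Y : ℤ × ℤ} (hX : valid X) (hY : valid Y) (hd : det X Y = 1)
    {z : FareyVertex} (h1 : FareyNeighbor (vtx X) z) (h2 : FareyNeighbor (vtx Y) z) :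
    vec z = X + Y ∨ vec z = compv X Y := by
  rw [neighbor_iff, vec_vtx hX] at h1
  rw [neighbor_iff, vec_vtx hY] at h2
  rcases third hd h1 h2 with h | h | h | h
  · exact Or.inl h
  · exfalso
    have hz2 := vec_snd_nonneg z
    have hpos := snd_pos_add hX hY hd
    have := congrArg Prod.snd h
    simp only [Prod.snd_neg] at this
    omega
  · right
    have hz2 := vec_snd_nonneg z
    rw [h] at hz2 ⊢
    unfold compv
    rw [if_pos hz2]
  · -- vec z = Y - X
    have hz2 := vec_snd_nonneg z
    rcases lt_or_ge (X - Y).2 0 with hlt | hle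
    · right
      rw [h]
      unfold compv
      rw [if_neg (by omega)]
    · -- (X-Y).2 ≥ 0 and (Y-X).2 ≥ 0 force X.2 = Y.2, contradiction
      exfalso
      have e1 : (X - Y).2 = X.2 - Y.2 := rfl
      have e2 : (vec z).2 = Y.2 - X.2 := by rw [h]; rfl
      have h22 : X.2 = Y.2 := by omega
      -- vec z = (Y.1 - X.1, 0), valid, so = (1,0), so Y.1 - X.1 = 1
      have hz0 : (vec z).2 = 0 := by omega
      have hz10 : vec z = (1, 0) := by
        rcases vec_valid z with ⟨hp, _⟩ | he
        · omega
        · exact he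
      have hYX1 : Y.1 - X.1 = 1 := by
        have := congrArg Prod.fst h
        have e3 : (Y - X).1 = Y.1 - X.1 := rfl
        rw [hz10] at this
        simp only [Prod.fst_sub] at this
        omega
      have hd' : X.1 * Y.2 - X.2 * Y.1 = 1 := hd
      have hsnn := valid_snd_nonneg hX
      have e : X.1 * Y.2 - X.2 * Y.1 = X.2 * (X.1 - Y.1) := by rw [← h22]; ring
      rw [show X.1 - Y.1 = -1 by omega] at e
      linarith [hd', e, hsnn]

lemma third_of_pair {T : FareyTriangle} {x y : FareyVertex} (hx : x ∈ T.verts)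
    (hy : y ∈ T.verts) (hxy : x ≠ y) : ∃ z, z ≠ x ∧ z ≠ y ∧ T.verts = {x, y, z} := by
  have hsub : ({x, y} : Finset FareyVertex) ⊆ T.verts := by
    intro v hv
    simp only [Finset.mem_insert, Finset.mem_singleton] at hv
    rcases hv with rfl | rfl <;> assumption
  have hc2 : ({x, y} : Finset FareyVertex).card = 2 := Finset.card_pair hxy
  have hcard : (T.verts \ {x, y}).card = 1 := by
    rw [Finset.card_sdiff_of_subset hsub, T.card_eq, hc2]
  obtain ⟨z, hz⟩ := Finset.card_eq_one.mp hcard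
  have hzmem : z ∈ T.verts \ {x, y} := by rw [hz]; simp
  simp only [Finset.mem_sdiff, Finset.mem_insert, Finset.mem_singleton] at hzmem
  obtain ⟨hzT, hzne⟩ := hzmem
  refine ⟨z, fun h => hzne (Or.inl h), fun h => hzne (Or.inr h), ?_⟩
  have hu := Finset.union_sdiff_of_subset hsub
  rw [hz] at hu
  rw [← hu]
  ext v
  simp only [Finset.mem_union, Finset.mem_insert, Finset.mem_singleton]
  tauto

lemma inter_cfg {x y z w : FareyVertex} (hzx : z ≠ x) (hzy : z ≠ y)
    (hwx : w ≠ x) (hwy : w ≠ y) (hzw : z ≠ w) :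
    (({x, y, z} : Finset FareyVertex) ∩ {x, y, w}) = {x, y} := by
  ext v
  simp only [Finset.mem_inter, Finset.mem_insert, Finset.mem_singleton]
  constructor
  · rintro ⟨rfl | rfl | rfl, h2⟩
    · exact Or.inl rfl
    · exact Or.inr rfl
    · rcases h2 with rfl | rfl | h2
      · exact absurd rfl hzx
      · exact absurd rfl hzy
      · exact absurd h2 hzw
  · rintro (rfl | rfl)
    · exact ⟨Or.inl rfl, Or.inl rfl⟩
    · exact ⟨Or.inr (Or.inl rfl), Or.inr (Or.inl rfl)⟩

lemma adj_ne {T T' : FareyTriangle} (h : fareyTree.Adj T T') : T ≠ T' := by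
  intro he
  rw [he] at h
  exact fareyTree.loopless.irrefl T' h

lemma adj_pair {T T' : FareyTriangle} (h : fareyTree.Adj T T') :
    ∃ x y z z', x ≠ y ∧ z ≠ x ∧ z ≠ y ∧ z' ≠ x ∧ z' ≠ y ∧ z ≠ z' ∧
      T.verts = {x, y, z} ∧ T'.verts = {x, y, z'} := by
  have h2 : (T.verts ∩ T'.verts).card = 2 := h
  obtain ⟨x, y, hxy, hint⟩ := Finset.card_eq_two.mp h2
  have hxT : x ∈ T.verts := by
    have : x ∈ T.verts ∩ T'.verts := by rw [hint]; simp
    exact (Finset.mem_inter.mp this).1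
  have hxT' : x ∈ T'.verts := by
    have : x ∈ T.verts ∩ T'.verts := by rw [hint]; simp
    exact (Finset.mem_inter.mp this).2
  have hyT : y ∈ T.verts := by
    have : y ∈ T.verts ∩ T'.verts := by rw [hint]; simp
    exact (Finset.mem_inter.mp this).1
  have hyT' : y ∈ T'.verts := by
    have : y ∈ T.verts ∩ T'.verts := by rw [hint]; simp
    exact (Finset.mem_inter.mp this).2
  obtain ⟨z, hzx, hzy, hTz⟩ := third_of_pair hxT hyT hxy
  obtain ⟨z', hz'x, hz'y, hTz'⟩ := third_of_pair hxT' hyT' hxy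
  refine ⟨x, y, z, z', hxy, hzx, hzy, hz'x, hz'y, ?_, hTz, hTz'⟩
  intro he
  apply adj_ne h
  apply FareyTriangle.ext
  rw [hTz, hTz', he]

lemma adj_normal {T T' : FareyTriangle} (h : fareyTree.Adj T T') :
    ∃ X Y, valid X ∧ valid Y ∧ det X Y = 1 ∧
      ((T.verts = {vtx X, vtx Y, vtx (X + Y)} ∧ T'.verts = {vtx X, vtx Y, vtx (compv X Y)}) ∨
       (T'.verts = {vtx X, vtx Y, vtx (X + Y)} ∧ T.verts = {vtx X, vtx Y, vtx (compv X Y)})) := by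
  obtain ⟨x, y, z, z', hxy, hzx, hzy, hz'x, hz'y, hzz', hTz, hTz'⟩ := adj_pair h
  have hmemz : z ∈ T.verts := by rw [hTz]; simp
  have hmemx : x ∈ T.verts := by rw [hTz]; simp
  have hmemy : y ∈ T.verts := by rw [hTz]; simp
  have hmemz' : z' ∈ T'.verts := by rw [hTz']; simp
  have hmemx' : x ∈ T'.verts := by rw [hTz']; simp
  have hmemy' : y ∈ T'.verts := by rw [hTz']; simp
  have hdet := T.neighbors x hmemx y hmemy hxy
  rw [neighbor_iff] at hdet
  have hnzx := T.neighbors x hmemx z hmemz (Ne.symm hzx)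
  have hnzy := T.neighbors y hmemy z hmemz (Ne.symm hzy)
  have hnz'x := T'.neighbors x hmemx' z' hmemz' (Ne.symm hz'x)
  have hnz'y := T'.neighbors y hmemy' z' hmemz' (Ne.symm hz'y)
  -- orient
  rcases abs_eq_one hdet with hd | hd
  · have c1 := third_vertex (vec_valid x) (vec_valid y) hd
      (by rw [vtx_vec]; exact hnzx) (by rw [vtx_vec]; exact hnzy)
    have c2 := third_vertex (vec_valid x) (vec_valid y) hd
      (by rw [vtx_vec]; exact hnz'x) (by rw [vtx_vec]; exact hnz'y)
    refine ⟨vec x, vec y, vec_valid x, vec_valid y, hd, ?_⟩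
    rcases c1 with e1 | e1 <;> rcases c2 with e2 | e2
    · exact absurd (vec_inj (e1.trans e2.symm)) hzz'
    · left
      constructor
      · rw [hTz, eq_vtx_of_vec e1, vtx_vec x, vtx_vec y]
      · rw [hTz', eq_vtx_of_vec e2, vtx_vec x, vtx_vec y]
    · right
      constructor
      · rw [hTz', eq_vtx_of_vec e2, vtx_vec x, vtx_vec y]
      · rw [hTz, eq_vtx_of_vec e1, vtx_vec x, vtx_vec y]
    · exact absurd (vec_inj (e1.trans e2.symm)) hzz'
  · have hd2 : det (vec y) (vec x) = 1 := by rw [det_swap]; omega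
    have c1 := third_vertex (vec_valid y) (vec_valid x) hd2
      (by rw [vtx_vec]; exact hnzy) (by rw [vtx_vec]; exact hnzx)
    have c2 := third_vertex (vec_valid y) (vec_valid x) hd2
      (by rw [vtx_vec]; exact hnz'y) (by rw [vtx_vec]; exact hnz'x)
    refine ⟨vec y, vec x, vec_valid y, vec_valid x, hd2, ?_⟩
    have hswapT : T.verts = {y, x, z} := by rw [hTz]; exact Finset.insert_comm x y _
    have hswapT' : T'.verts = {y, x, z'} := by rw [hTz']; exact Finset.insert_comm x y _
    rcases c1 with e1 | e1 <;> rcases c2 with e2 | e2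
    · exact absurd (vec_inj (e1.trans e2.symm)) hzz'
    · left
      constructor
      · rw [hswapT, eq_vtx_of_vec e1, vtx_vec x, vtx_vec y]
      · rw [hswapT', eq_vtx_of_vec e2, vtx_vec x, vtx_vec y]
    · right
      constructor
      · rw [hswapT', eq_vtx_of_vec e2, vtx_vec x, vtx_vec y]
      · rw [hswapT, eq_vtx_of_vec e1, vtx_vec x, vtx_vec y]
    · exact absurd (vec_inj (e1.trans e2.symm)) hzz'

end FTX

namespace FTX

lemma vtx01 : vtx ((0:ℤ), (1:ℤ)) = some (0:ℚ) := by
  unfold vtx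
  norm_num

lemma vtx10 : vtx ((1:ℤ), (0:ℤ)) = none := by
  unfold vtx
  norm_num

lemma vtx11 : vtx ((1:ℤ), (1:ℤ)) = some (1:ℚ) := by
  unfold vtx
  norm_num

lemma vtxm11 : vtx ((-1:ℤ), (1:ℤ)) = some (-1:ℚ) := by
  unfold vtx
  norm_num

lemma valid01 : valid ((0:ℤ), (1:ℤ)) := Or.inl ⟨by norm_num, by norm_num [Int.gcd]⟩
lemma valid10 : valid ((1:ℤ), (0:ℤ)) := Or.inr rfl
lemma valid11 : valid ((1:ℤ), (1:ℤ)) := Or.inl ⟨by norm_num, by norm_num [Int.gcd]⟩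

lemma std0_verts : (stdTriangle 0).verts = {some (0:ℚ), some (1:ℚ), none} := by
  show ({some ((0:ℤ):ℚ), some ((0+1:ℤ):ℚ), none} : Finset FareyVertex) = _
  norm_num

lemma std0_verts' : (stdTriangle 0).verts = {vtx (1,0), vtx (0,1), vtx ((1,0) + (0,1))} := by
  rw [std0_verts, show ((1,0) + (0,1) : ℤ × ℤ) = (1,1) by norm_num [Prod.ext_iff], vtx10,
    vtx01, vtx11]
  ext v
  simp only [Finset.mem_insert, Finset.mem_singleton]
  tauto

lemma S2_01 : S2 ((0:ℤ), (1:ℤ)) = 0 := by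
  show S 0 1 = 0
  exact S_01

lemma S2_10 : S2 ((1:ℤ), (0:ℤ)) = 0 := by
  show S 1 0 = 0
  exact S_zero 1

lemma S2_11 : S2 ((1:ℤ), (1:ℤ)) = 1 := by
  show S 1 1 = 1
  exact S_n1 1

lemma rk_decomp {T : FareyTriangle} (hnT : ¬ neg T) {X Y : ℤ × ℤ}
    (hX : valid X) (hY : valid Y) (hd : det X Y = 1)
    (hT : T.verts = {vtx X, vtx Y, vtx (X + Y)}) :
    rk T = max (S2 X) (S2 Y) ∧ S2 (X + Y) = max (S2 X) (S2 Y) + 1 ∧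
      mid T = vtx (X + Y) := by
  have hXY := valid_add hX hY hd
  have hxy : vtx X ≠ vtx Y := vtx_ne hX hY (ne_of_det_one hd)
  have hmx : vtx (X + Y) ≠ vtx X := vtx_ne hXY hX (add_ne_left hY)
  have hmy : vtx (X + Y) ≠ vtx Y := vtx_ne hXY hY (add_ne_right hX)
  have memX : vtx X ∈ T.verts := by rw [hT]; simp
  have memY : vtx Y ∈ T.verts := by rw [hT]; simp
  have memM : vtx (X + Y) ∈ T.verts := by rw [hT]; simp
  have hsum : vec (vtx (X + Y)) = vec (vtx X) + vec (vtx Y) := by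
    simp only [vec_vtx hX, vec_vtx hY, vec_vtx hXY]
  obtain ⟨r1, s1⟩ := rk_formula hnT memX memY memM hxy hmx hmy hsum
  simp only [vec_vtx hX, vec_vtx hY, vec_vtx hXY] at r1 s1
  exact ⟨r1, s1, mid_eq ⟨memM, vtx X, memX, vtx Y, memY, hxy, hmx, hmy, hsum⟩⟩

lemma S2_mid_pos {T : FareyTriangle} (hn : ¬ neg T) : 1 ≤ S2 (vec (mid T)) := by
  obtain ⟨X, Y, hX, hY, hd, hT⟩ := decomp_verts T
  obtain ⟨-, s1, hmid⟩ := rk_decomp hn hX hY hd hT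
  rw [hmid, vec_vtx (valid_add hX hY hd)]
  omega

lemma rk_neg_reflect {T : FareyTriangle} (h : neg T) : rk T = rk (reflect T) + 1 := by
  have hnn := not_neg_reflect h
  rw [rk_of_neg h, rk_of_nonneg hnn]
  have := S2_mid_pos hnn
  omega

lemma rk_reflect_of_nonneg {T : FareyTriangle} (h : ¬ neg T) :
    rk (reflect T) = rk T + 1 := by
  have hneg : neg (reflect T) := neg_reflect_of_not_neg h
  rw [rk_neg_reflect hneg, reflect_reflect]

lemma not_neg_std0 : ¬ neg (stdTriangle 0) := by
  rintro ⟨v, hv, hneg⟩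
  rw [std0_verts] at hv
  simp only [Finset.mem_insert, Finset.mem_singleton] at hv
  rcases hv with rfl | rfl | rfl
  · have : fnum (some (0:ℚ)) = 0 := by simp [fnum]
    omega
  · have : fnum (some (1:ℚ)) = 1 := by simp [fnum]
    omega
  · have : fnum (none : FareyVertex) = 1 := rfl
    omega

lemma rk_std0 : rk (stdTriangle 0) = 0 := by
  obtain ⟨r1, -, -⟩ := rk_decomp not_neg_std0 valid10 valid01 (by norm_num [det]) std0_verts'
  rw [r1, S2_10, S2_01]
  rfl

lemma zero_or_inf {X : ℤ × ℤ} (hX : valid X) (h : X.1 = 0 ∨ X.2 = 0) :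
    X = (0, 1) ∨ X = (1, 0) := by
  rcases hX with ⟨hpos, hg⟩ | he
  · rcases h with h1 | h1
    · left
      rw [h1] at hg
      simp [Int.gcd] at hg
      have : X.2 = 1 := by
        rcases Int.natAbs_eq X.2 with he | he <;> omega
      exact Prod.ext h1 this
    · omega
  · exact Or.inr he

lemma S2_zero_valid {X : ℤ × ℤ} (hX : valid X) (hnn : 0 ≤ X.1) (h : S2 X = 0) :
    X = (0, 1) ∨ X = (1, 0) := by
  have hsnn := valid_snd_nonneg hX
  have hgcd : Nat.gcd X.1.toNat X.2.toNat = 1 := by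
    have hg := valid_gcd hX
    unfold Int.gcd at hg
    rwa [show X.1.natAbs = X.1.toNat by omega,
      show X.2.natAbs = X.2.toNat by omega] at hg
  rcases S_eq_zero hgcd h with ⟨h1, h2⟩ | ⟨h1, h2⟩
  · left
    refine Prod.ext ?_ ?_ <;> simp only [] <;> omega
  · right
    refine Prod.ext ?_ ?_ <;> simp only [] <;> omega

lemma fnum_vtx {X : ℤ × ℤ} (hX : valid X) : fnum (vtx X) = X.1 :=
  congrArg Prod.fst (vec_vtx hX)

lemma fden_vtx {X : ℤ × ℤ} (hX : valid X) : fden (vtx X) = X.2 :=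
  congrArg Prod.snd (vec_vtx hX)

lemma rk_eq_zero {T : FareyTriangle} (h : rk T = 0) : T = stdTriangle 0 := by
  by_cases hn : neg T
  · rw [rk_neg_reflect hn] at h
    omega
  · obtain ⟨X, Y, hX, hY, hd, hT⟩ := decomp_verts T
    obtain ⟨r1, -, -⟩ := rk_decomp hn hX hY hd hT
    have hXnn : 0 ≤ X.1 := by
      have : vtx X ∈ T.verts := by rw [hT]; simp
      have := nonneg_fnum hn this
      rwa [fnum_vtx hX] at this
    have hYnn : 0 ≤ Y.1 := by
      have : vtx Y ∈ T.verts := by rw [hT]; simp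
      have := nonneg_fnum hn this
      rwa [fnum_vtx hY] at this
    have hX0 : S2 X = 0 := by omega
    have hY0 : S2 Y = 0 := by omega
    have hXc := S2_zero_valid hX hXnn hX0
    have hYc := S2_zero_valid hY hYnn hY0
    apply FareyTriangle.ext
    rcases hXc with rfl | rfl <;> rcases hYc with rfl | rfl
    · exfalso; exact ne_of_det_one hd rfl
    · exfalso
      have : det ((0:ℤ),(1:ℤ)) ((1:ℤ),(0:ℤ)) = -1 := by norm_num [det]
      omega
    · rw [hT, std0_verts']
    · exfalso; exact ne_of_det_one hd rfl

end FTX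

namespace FTX

lemma compv_10_01 : compv ((1:ℤ),(0:ℤ)) ((0:ℤ),(1:ℤ)) = ((-1:ℤ),(1:ℤ)) := by
  unfold compv
  norm_num

lemma det_10_01 : det ((1:ℤ),(0:ℤ)) ((0:ℤ),(1:ℤ)) = 1 := by norm_num [det]

lemma add_10_01 : ((1:ℤ),(0:ℤ)) + ((0:ℤ),(1:ℤ)) = ((1:ℤ),(1:ℤ)) := by
  norm_num [Prod.ext_iff]

lemma fnum_some (r : ℚ) : fnum (some r) = r.num := rfl
lemma fden_some (r : ℚ) : fden (some r) = (r.den : ℤ) := rfl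

lemma rk_stdm1_verts {T : FareyTriangle}
    (hv : T.verts = {none, some (0:ℚ), some (-1:ℚ)}) : rk T = 1 := by
  have hneg : neg T := by
    refine ⟨some (-1:ℚ), by rw [hv]; simp, ?_⟩
    rw [fnum_some]
    norm_num
  rw [rk_of_neg hneg]
  have hrefl : (reflect T).verts = {none, some (0:ℚ), some (1:ℚ)} := by
    rw [reflect_verts, hv]
    rw [Finset.image_insert, Finset.image_insert, Finset.image_singleton]
    have e1 : rOpt none = none := rfl
    have e2 : rOpt (some (0:ℚ)) = some (0:ℚ) := by simp [rOpt]
    have e3 : rOpt (some (-1:ℚ)) = some (1:ℚ) := by norm_num [rOpt]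
    rw [e1, e2, e3]
  have hmem1 : (none : FareyVertex) ∈ (reflect T).verts := by rw [hrefl]; simp
  have hmem2 : some (0:ℚ) ∈ (reflect T).verts := by rw [hrefl]; simp
  have hmem3 : some (1:ℚ) ∈ (reflect T).verts := by rw [hrefl]; simp
  have hd1 : (some (1:ℚ) : FareyVertex) ≠ none := by simp
  have hd2 : some (1:ℚ) ≠ some (0:ℚ) := by norm_num
  have hd3 : (none : FareyVertex) ≠ some (0:ℚ) := by simp
  have hmid : mid (reflect T) = some (1:ℚ) :=
    mid_eq ⟨hmem3, none, hmem1, some (0:ℚ), hmem2, hd3, hd1, hd2, by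
      rw [vec_some_one, vec_none, vec_some_zero]
      norm_num [Prod.ext_iff]⟩
  rw [hmid, vec_some_one, S2_11]

lemma mixed_adj {T T' : FareyTriangle} (h : fareyTree.Adj T T') (hnT : ¬ neg T)
    (hnT' : neg T') : rk T = 0 ∧ rk T' = 1 := by
  obtain ⟨x, y, z, z', hxy, hzx, hzy, hz'x, hz'y, hzz', hTz, hTz'⟩ := adj_pair h
  have hmemxT : x ∈ T.verts := by rw [hTz]; simp
  have hmemyT : y ∈ T.verts := by rw [hTz]; simp
  have hmemzT : z ∈ T.verts := by rw [hTz]; simp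
  have hmemxT' : x ∈ T'.verts := by rw [hTz']; simp
  have hmemyT' : y ∈ T'.verts := by rw [hTz']; simp
  have hmemz'T' : z' ∈ T'.verts := by rw [hTz']; simp
  have classify : ∀ v ∈ T.verts, v ∈ T'.verts → v = none ∨ v = some (0:ℚ) := by
    intro v hv hv'
    have h1 := nonneg_fnum hnT hv
    rcases neg_all hnT' v hv' with h2 | h2
    · exact Or.inr (fnum_zero_eq (by omega))
    · exact Or.inl (fden_eq_zero h2)
  have cx := classify x hmemxT hmemxT'
  have cy := classify y hmemyT hmemyT'
  -- wlog via case analysis: {x,y} = {none, some 0}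
  have main : ∀ (T₀ T₀' : FareyTriangle) (z₀ z₀' : FareyVertex),
      ¬ neg T₀ → neg T₀' →
      z₀ ≠ none → z₀ ≠ some (0:ℚ) → z₀' ≠ none → z₀' ≠ some (0:ℚ) →
      T₀.verts = {none, some (0:ℚ), z₀} → T₀'.verts = {none, some (0:ℚ), z₀'} →
      rk T₀ = 0 ∧ rk T₀' = 1 := by
    intro T₀ T₀' z₀ z₀' hn0 hn0' hz1 hz2 hz1' hz2' hv hv'
    have hmx : (none : FareyVertex) ∈ T₀.verts := by rw [hv]; simp
    have hmy : some (0:ℚ) ∈ T₀.verts := by rw [hv]; simp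
    have hmz : z₀ ∈ T₀.verts := by rw [hv]; simp
    have hmx' : (none : FareyVertex) ∈ T₀'.verts := by rw [hv']; simp
    have hmy' : some (0:ℚ) ∈ T₀'.verts := by rw [hv']; simp
    have hmz' : z₀' ∈ T₀'.verts := by rw [hv']; simp
    have hne0 : (none : FareyVertex) ≠ some (0:ℚ) := by simp
    have hnz := T₀.neighbors _ hmx z₀ hmz (Ne.symm hz1)
    have hnz2 := T₀.neighbors _ hmy z₀ hmz (Ne.symm hz2)
    have hnz' := T₀'.neighbors _ hmx' z₀' hmz' (Ne.symm hz1')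
    have hnz2' := T₀'.neighbors _ hmy' z₀' hmz' (Ne.symm hz2')
    have cz := third_vertex valid10 valid01 det_10_01
      (by rw [vtx10]; exact hnz) (by rw [vtx01]; exact hnz2)
    have cz' := third_vertex valid10 valid01 det_10_01
      (by rw [vtx10]; exact hnz') (by rw [vtx01]; exact hnz2')
    rw [add_10_01] at cz cz'
    rw [compv_10_01] at cz cz'
    have hz0 : z₀ = some (1:ℚ) := by
      rcases cz with e | e
      · have := eq_vtx_of_vec e
        rwa [vtx11] at this
      · exfalso
        have h1 := nonneg_fnum hn0 hmz
        have : fnum z₀ = -1 := congrArg Prod.fst e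
        omega
    have hz'0 : z₀' = some (-1:ℚ) := by
      rcases cz' with e | e
      · exfalso
        obtain ⟨w, hw, hwneg⟩ := hn0'
        rw [hv'] at hw
        simp only [Finset.mem_insert, Finset.mem_singleton] at hw
        have heq := eq_vtx_of_vec e
        rw [vtx11] at heq
        rcases hw with rfl | rfl | rfl
        · exact absurd hwneg (by norm_num [fnum])
        · exact absurd hwneg (by norm_num [fnum_some])
        · rw [heq] at hwneg
          exact absurd hwneg (by norm_num [fnum_some])
      · have := eq_vtx_of_vec e
        rwa [vtxm11] at this
    subst hz0 hz'0
    constructor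
    · have hTnorm : T₀.verts = {vtx (1,0), vtx (0,1), vtx ((1,0) + (0,1))} := by
        rw [hv, vtx10, vtx01, add_10_01, vtx11]
      obtain ⟨r1, -, -⟩ := rk_decomp hn0 valid10 valid01 det_10_01 hTnorm
      rw [r1, S2_10, S2_01]
      rfl
    · exact rk_stdm1_verts hv'
  rcases cx with rfl | rfl <;> rcases cy with rfl | rfl
  · exact absurd rfl hxy
  · exact main T T' z z' hnT hnT' hzx hzy hz'x hz'y hTz hTz'
  · have hTz2 : T.verts = {none, some (0:ℚ), z} := by rw [hTz]; exact Finset.insert_comm _ _ _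
    have hTz2' : T'.verts = {none, some (0:ℚ), z'} := by
      rw [hTz']; exact Finset.insert_comm _ _ _
    exact main T T' z z' hnT hnT' hzy hzx hz'y hz'x hTz2 hTz2'
  · exact absurd rfl hxy

lemma rk_adj_nonneg {T T' : FareyTriangle} (h : fareyTree.Adj T T') (hnT : ¬ neg T)
    (hnT' : ¬ neg T') : rk T = rk T' + 1 ∨ rk T' = rk T + 1 := by
  obtain ⟨X, Y, hX, hY, hd, hc | hc⟩ := adj_normal h
  · exact Or.inl (edge_master hX hY hd hc.1 hc.2 hnT hnT')
  · exact Or.inr (edge_master hX hY hd hc.1 hc.2 hnT' hnT)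

lemma rk_adj {T T' : FareyTriangle} (h : fareyTree.Adj T T') :
    rk T = rk T' + 1 ∨ rk T' = rk T + 1 := by
  by_cases hnT : neg T <;> by_cases hnT' : neg T'
  · have h2 := reflect_adj h
    rcases rk_adj_nonneg h2 (not_neg_reflect hnT) (not_neg_reflect hnT') with hc | hc
    · left; rw [rk_neg_reflect hnT, rk_neg_reflect hnT']; omega
    · right; rw [rk_neg_reflect hnT, rk_neg_reflect hnT']; omega
  · obtain ⟨h1, h2⟩ := mixed_adj (fareyTree.symm.symm _ _ h) hnT' hnT
    left; omega
  · obtain ⟨h1, h2⟩ := mixed_adj h hnT hnT'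
    right; omega
  · exact rk_adj_nonneg h hnT hnT'

lemma compv_dets {X Y : ℤ × ℤ} (hX : valid X) (hY : valid Y) (hd : det X Y = 1) :
    |det X (compv X Y)| = 1 ∧ |det Y (compv X Y)| = 1 := by
  have hd' : det X Y = 1 := hd
  rcases compv_cases hX hY hd with ⟨hW, -⟩ | ⟨hW, -⟩ <;> rw [hW]
  · have e1 : det X (X - Y) = -(det X Y) := by simp [det]; ring
    have e2 : det Y (X - Y) = -(det X Y) := by simp [det]; ring
    rw [e1, e2, hd']
    norm_num
  · have e1 : det X (Y - X) = det X Y := by simp [det]; ring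
    have e2 : det Y (Y - X) = det X Y := by simp [det]; ring
    rw [e1, e2, hd']
    norm_num

lemma parent_of_decomp {T : FareyTriangle} {X Y : ℤ × ℤ} (hnT : ¬ neg T)
    (hT0 : T ≠ stdTriangle 0) (hX : valid X) (hY : valid Y) (hd : det X Y = 1)
    (hTv : T.verts = {vtx X, vtx Y, vtx (X + Y)}) :
    ∃ P, fareyTree.Adj T P ∧ rk T = rk P + 1 ∧ ¬ neg P ∧
      P.verts = {vtx X, vtx Y, vtx (compv X Y)} := by
  have hW := valid_compv hX hY hd
  have hXY := valid_add hX hY hd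
  obtain ⟨dXW, dYW⟩ := compv_dets hX hY hd
  have hxy : vtx X ≠ vtx Y := vtx_ne hX hY (ne_of_det_one hd)
  have hwx : vtx (compv X Y) ≠ vtx X := vtx_ne hW hX (compv_ne_left hX hY hd)
  have hwy : vtx (compv X Y) ≠ vtx Y := vtx_ne hW hY (compv_ne_right hX hY hd)
  have hmx : vtx (X + Y) ≠ vtx X := vtx_ne hXY hX (add_ne_left hY)
  have hmy : vtx (X + Y) ≠ vtx Y := vtx_ne hXY hY (add_ne_right hX)
  have hmw : vtx (X + Y) ≠ vtx (compv X Y) :=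
    vtx_ne hXY hW (fun he => compv_ne_add hX hY hd he.symm)
  have nXY : FareyNeighbor (vtx X) (vtx Y) := neighbor_of_det hX hY (by rw [hd]; norm_num)
  have nXW : FareyNeighbor (vtx X) (vtx (compv X Y)) := neighbor_of_det hX hW dXW
  have nYW : FareyNeighbor (vtx Y) (vtx (compv X Y)) := neighbor_of_det hY hW dYW
  set P := mkTriangle (vtx X) (vtx Y) (vtx (compv X Y)) hxy (Ne.symm hwx) (Ne.symm hwy)
    nXY nXW nYW with hPdef
  have hPv : P.verts = {vtx X, vtx Y, vtx (compv X Y)} := rfl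
  have hnP : ¬ neg P := by
    intro hnegP
    obtain ⟨v, hv, hvneg⟩ := hnegP
    rw [hPv] at hv
    simp only [Finset.mem_insert, Finset.mem_singleton] at hv
    have hXnn : 0 ≤ X.1 := by
      have hm : vtx X ∈ T.verts := by rw [hTv]; simp
      have := nonneg_fnum hnT hm
      rwa [fnum_vtx hX] at this
    have hYnn : 0 ≤ Y.1 := by
      have hm : vtx Y ∈ T.verts := by rw [hTv]; simp
      have := nonneg_fnum hnT hm
      rwa [fnum_vtx hY] at this
    rcases hv with rfl | rfl | rfl
    · rw [fnum_vtx hX] at hvneg; omega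
    · rw [fnum_vtx hY] at hvneg; omega
    · rw [fnum_vtx hW] at hvneg
      have hWden : 0 < (compv X Y).2 := by
        rcases hW with ⟨hp, -⟩ | he
        · exact hp
        · rw [he] at hvneg; norm_num at hvneg
      have hcX : X = (0,1) ∨ X = (1,0) := by
        apply zero_or_inf hX
        by_contra hc
        push_neg at hc
        apply no_straddle (neighbor_symm nXW)
        · rwa [fnum_vtx hW]
        · rw [fnum_vtx hX]; omega
        · rw [fden_vtx hX]
          have := valid_snd_nonneg hX
          omega
      have hcY : Y = (0,1) ∨ Y = (1,0) := by
        apply zero_or_inf hY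
        by_contra hc
        push_neg at hc
        apply no_straddle (neighbor_symm nYW)
        · rwa [fnum_vtx hW]
        · rw [fnum_vtx hY]; omega
        · rw [fden_vtx hY]
          have := valid_snd_nonneg hY
          omega
      apply hT0
      apply FareyTriangle.ext
      rcases hcX with rfl | rfl <;> rcases hcY with rfl | rfl
      · exact absurd rfl (ne_of_det_one hd)
      · exfalso
        have : det ((0:ℤ),(1:ℤ)) ((1:ℤ),(0:ℤ)) = -1 := by norm_num [det]
        omega
      · rw [hTv, std0_verts']
      · exact absurd rfl (ne_of_det_one hd)
  have hadj : fareyTree.Adj T P := by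
    show (T.verts ∩ P.verts).card = 2
    rw [hPv, hTv, inter_cfg hmx hmy hwx hwy hmw, Finset.card_pair hxy]
  exact ⟨P, hadj, edge_master hX hY hd hTv hPv hnT hnP, hnP, hPv⟩

lemma parent_nonneg {T : FareyTriangle} (hnT : ¬ neg T) (hT0 : T ≠ stdTriangle 0) :
    ∃ P, fareyTree.Adj T P ∧ rk T = rk P + 1 ∧ ¬ neg P := by
  obtain ⟨X, Y, hX, hY, hd, hTv⟩ := decomp_verts T
  obtain ⟨P, h1, h2, h3, -⟩ := parent_of_decomp hnT hT0 hX hY hd hTv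
  exact ⟨P, h1, h2, h3⟩

lemma exists_parent {T : FareyTriangle} (hT0 : T ≠ stdTriangle 0) :
    ∃ P, fareyTree.Adj T P ∧ rk T = rk P + 1 := by
  by_cases hn : neg T
  · by_cases hR : reflect T = stdTriangle 0
    · have hTeq : T = reflect (stdTriangle 0) := by rw [← hR, reflect_reflect]
      have hTv : T.verts = {none, some (0:ℚ), some (-1:ℚ)} := by
        rw [hTeq, reflect_verts, std0_verts]
        rw [Finset.image_insert, Finset.image_insert, Finset.image_singleton]
        have e1 : rOpt none = none := rfl
        have e2 : rOpt (some (0:ℚ)) = some (0:ℚ) := by simp [rOpt]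
        have e3 : rOpt (some (1:ℚ)) = some (-1:ℚ) := by norm_num [rOpt]
        rw [e1, e2, e3]
        ext v
        simp only [Finset.mem_insert, Finset.mem_singleton]
        tauto
      refine ⟨stdTriangle 0, ?_, ?_⟩
      · show (T.verts ∩ (stdTriangle 0).verts).card = 2
        have hstd : (stdTriangle 0).verts = {none, some (0:ℚ), some (1:ℚ)} := by
          rw [std0_verts]
          ext v
          simp only [Finset.mem_insert, Finset.mem_singleton]
          tauto
        have hne1 : (some (-1:ℚ) : FareyVertex) ≠ none := by simp
        have hne2 : (some (-1:ℚ) : FareyVertex) ≠ some (0:ℚ) := by norm_num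
        have hne3 : (some (1:ℚ) : FareyVertex) ≠ none := by simp
        have hne4 : (some (1:ℚ) : FareyVertex) ≠ some (0:ℚ) := by norm_num
        have hne5 : (some (-1:ℚ) : FareyVertex) ≠ some (1:ℚ) := by norm_num
        rw [hTv, hstd, inter_cfg hne1 hne2 hne3 hne4 hne5,
          Finset.card_pair (by simp : (none : FareyVertex) ≠ some (0:ℚ))]
      · rw [rk_neg_reflect hn, hR, rk_std0]
    · obtain ⟨P', hadj, hrk, hP'nn⟩ := parent_nonneg (not_neg_reflect hn) hR
      refine ⟨reflect P', ?_, ?_⟩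
      · have := reflect_adj hadj
        rwa [reflect_reflect] at this
      · rw [rk_neg_reflect hn, hrk, rk_reflect_of_nonneg hP'nn]
  · obtain ⟨P, hadj, hrk, -⟩ := parent_nonneg hn hT0
    exact ⟨P, hadj, hrk⟩

end FTX

namespace FTX

lemma rk_le_walk {T : FareyTriangle} (W : fareyTree.Walk T (stdTriangle 0)) :
    rk T ≤ W.length := by
  generalize hB : stdTriangle 0 = B at W
  induction W with
  | nil =>
    rw [← hB, rk_std0]
    simp
  | cons h W ih =>
    rw [SimpleGraph.Walk.length_cons]
    have ih2 := ih hB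
    rcases rk_adj h with hc | hc <;> omega

lemma dist_eq_rk' : ∀ (n : ℕ) (T : FareyTriangle), rk T = n →
    fareyTree.Reachable T (stdTriangle 0) ∧ fareyTree.dist T (stdTriangle 0) = rk T := by
  intro n
  induction n using Nat.strong_induction_on with
  | _ n ih =>
    intro T hT
    rcases Nat.eq_zero_or_pos n with rfl | hpos
    · have hstd := rk_eq_zero hT
      subst hstd
      exact ⟨SimpleGraph.Reachable.refl _, by rw [SimpleGraph.dist_self, hT]⟩
    · have hT0 : T ≠ stdTriangle 0 := by
        intro he
        rw [he, rk_std0] at hT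
        omega
      obtain ⟨P, hadj, hrk⟩ := exists_parent hT0
      obtain ⟨hreach, hdist⟩ := ih (n - 1) (by omega) P (by omega)
      have hreachT : fareyTree.Reachable T (stdTriangle 0) :=
        (hadj.reachable).trans hreach
      refine ⟨hreachT, ?_⟩
      have hub : fareyTree.dist T (stdTriangle 0) ≤ rk T := by
        obtain ⟨WP, hWP⟩ := hreach.exists_walk_length_eq_dist
        have := SimpleGraph.dist_le (SimpleGraph.Walk.cons hadj WP)
        rw [SimpleGraph.Walk.length_cons, hWP] at this
        omega
      have hlb : rk T ≤ fareyTree.dist T (stdTriangle 0) := by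
        obtain ⟨W, hW⟩ := hreachT.exists_walk_length_eq_dist
        have := rk_le_walk W
        omega
      omega

lemma dist_eq_rk (T : FareyTriangle) : fareyTree.dist T (stdTriangle 0) = rk T :=
  (dist_eq_rk' (rk T) T rfl).2

end FTX

namespace FTX

lemma S_pos {p q : ℕ} (hp : 1 ≤ p) (hq : 1 ≤ q) : 1 ≤ S p q := by
  rw [S_rec _ (by omega : q ≠ 0)]
  rcases le_or_gt q p with h | h
  · have := (Nat.one_le_div_iff (by omega : 0 < q)).mpr h
    omega
  · rw [Nat.mod_eq_of_lt h, S_rec _ (by omega : p ≠ 0)]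
    have h1 := (Nat.one_le_div_iff (by omega : 0 < p)).mpr (by omega : p ≤ q)
    have h2 : 0 ≤ p / q := Nat.zero_le _
    have h3 : 0 ≤ S p (q % p) := Nat.zero_le _
    omega

lemma vec_div {p q : ℕ} (hp : 1 ≤ p) (hq : 1 ≤ q) (hpq : Nat.Coprime p q) :
    vec (some ((p:ℚ)/(q:ℚ))) = ((p:ℤ), (q:ℤ)) := by
  have hq0 : (0:ℤ) < (q:ℤ) := by exact_mod_cast hq
  have hcop : Nat.Coprime ((p:ℤ)).natAbs ((q:ℤ)).natAbs := by
    simpa [Int.natAbs_natCast] using hpq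
  have hnum := Rat.num_div_eq_of_coprime hq0 hcop
  have hden := Rat.den_div_eq_of_coprime hq0 hcop
  have hcast : (((p:ℤ)):ℚ) = (p:ℚ) := by push_cast; rfl
  have hcast2 : (((q:ℤ)):ℚ) = (q:ℚ) := by push_cast; rfl
  show ((((p:ℚ)/(q:ℚ)).num), ((((p:ℚ)/(q:ℚ)).den : ℤ))) = ((p:ℤ), (q:ℤ))
  rw [← hcast, ← hcast2]
  exact Prod.ext hnum hden

lemma S2_pq (p q : ℕ) : S2 ((p:ℤ), (q:ℤ)) = S p q := by
  show S ((p:ℤ)).toNat ((q:ℤ)).toNat = S p q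
  rw [Int.toNat_natCast, Int.toNat_natCast]

lemma det_add_right (X Y : ℤ × ℤ) : det X (X + Y) = det X Y := by simp [det]; ring

lemma det_add_right' (X Y : ℤ × ℤ) : det Y (X + Y) = - det X Y := by simp [det]; ring

lemma exists_can {p q : ℕ} (hp : 1 ≤ p) (hq : 1 ≤ q) (hpq : Nat.Coprime p q) :
    ∃ X Y : ℤ × ℤ, valid X ∧ valid Y ∧ det X Y = 1 ∧ X + Y = ((p:ℤ), (q:ℤ)) ∧
      0 ≤ X.1 ∧ 0 ≤ Y.1 := by
  rcases Nat.lt_or_ge q 2 with hq1 | hq2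
  · -- q = 1
    have hq1' : q = 1 := by omega
    refine ⟨(1, 0), ((p:ℤ) - 1, 1), valid10, ?_, ?_, ?_, by norm_num, ?_⟩
    · left
      exact ⟨by norm_num, by simp [Int.gcd]⟩
    · show (1:ℤ) * 1 - 0 * ((p:ℤ) - 1) = 1
      ring
    · subst hq1'
      refine Prod.ext ?_ ?_
      · show (1:ℤ) + ((p:ℤ) - 1) = (((p:ℕ):ℤ), ((1:ℕ):ℤ)).1
        simp
      · show (0:ℤ) + 1 = (((p:ℕ):ℤ), ((1:ℕ):ℤ)).2
        simp
    · show (0:ℤ) ≤ (p:ℤ) - 1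
      have : (1:ℤ) ≤ (p:ℤ) := by exact_mod_cast hp
      omega
  · -- q ≥ 2
    have hqZ : (0:ℤ) < (q:ℤ) := by exact_mod_cast hq
    have hq0 : (q:ℤ) ≠ 0 := by omega
    have hcopZ : IsCoprime (p:ℤ) (q:ℤ) := by
      rw [Int.isCoprime_iff_gcd_eq_one]
      simpa [Int.gcd, Int.natAbs_natCast] using hpq
    obtain ⟨u, w, huw⟩ := hcopZ
    set b : ℤ := u % (q:ℤ) with hb
    have hb0 : 0 ≤ b := Int.emod_nonneg u hq0
    have hbq : b < (q:ℤ) := Int.emod_lt_of_pos u hqZ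
    have hdvd : (q:ℤ) ∣ b * (p:ℤ) - 1 := by
      have h2 : (q:ℤ) ∣ u - u % (q:ℤ) := ⟨u / (q:ℤ), by rw [Int.emod_def]; ring⟩
      have h3 : b * (p:ℤ) - 1 = -(w * (q:ℤ)) - (u - u % (q:ℤ)) * (p:ℤ) := by
        rw [hb]
        have : u * (p:ℤ) - 1 = -(w * (q:ℤ)) := by linarith [huw]
        linarith [this]
      rw [h3]
      exact dvd_sub (dvd_neg.mpr (dvd_mul_left _ _)) (h2.mul_right _)
    have hb1 : 1 ≤ b := by
      by_contra hc
      have hb00 : b = 0 := by omega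
      rw [hb00] at hdvd
      have h4 : (q:ℤ) ∣ 1 := by
        have : (0:ℤ) * (p:ℤ) - 1 = -1 := by ring
        rw [this] at hdvd
        exact dvd_neg.mp hdvd
      have := Int.le_of_dvd (by norm_num) h4
      omega
    obtain ⟨a, ha⟩ := hdvd
    have hpZ : (1:ℤ) ≤ (p:ℤ) := by exact_mod_cast hp
    have ha0 : 0 ≤ a := by nlinarith [ha, hb1, hpZ, hqZ]
    have hap : a < (p:ℤ) := by nlinarith [ha, hbq, hpZ, hqZ, hb1]
    have hdet : det ((p:ℤ) - a, (q:ℤ) - b) (a, b) = 1 := by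
      show ((p:ℤ) - a) * b - ((q:ℤ) - b) * a = 1
      nlinarith [ha]
    refine ⟨((p:ℤ) - a, (q:ℤ) - b), (a, b), ?_, ?_, hdet, ?_, by simp; omega, by simp; omega⟩
    · left
      refine ⟨by simp; omega, ?_⟩
      have hd2 : |det (a, b) ((p:ℤ) - a, (q:ℤ) - b)| = 1 := by
        rw [det_swap, hdet]
        norm_num
      exact gcd_eq_one_of_det hd2
    · left
      refine ⟨by simp; omega, ?_⟩
      exact gcd_eq_one_of_det (by rw [hdet]; norm_num)
    · refine Prod.ext ?_ ?_ <;> simp <;> ring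

end FTX

open FTX in
theorem dist_triangle_V_eq_S_sub_two (p q : ℕ) (hp : 1 ≤ p) (hq : 1 ≤ q)
    (hpq : Nat.Coprime p q) (hne : (p : ℚ) / (q : ℚ) ≠ 1)
    (Tm : FareyTriangle) (hTm : some ((p : ℚ) / (q : ℚ)) ∈ Tm.verts)
    (hmin : ∀ T' : FareyTriangle, some ((p : ℚ) / (q : ℚ)) ∈ T'.verts →
      fareyTree.dist Tm (stdTriangle 0) ≤ fareyTree.dist T' (stdTriangle 0)) :
    (∃! TV : FareyTriangle, fareyTree.Adj Tm TV ∧ some ((p : ℚ) / (q : ℚ)) ∉ TV.verts) ∧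
    ∀ TV : FareyTriangle, fareyTree.Adj Tm TV → some ((p : ℚ) / (q : ℚ)) ∉ TV.verts →
      (fareyTree.dist TV (stdTriangle 0) : ℤ) = (S p q : ℤ) - 2 := by
  set v : FareyVertex := some ((p : ℚ) / (q : ℚ)) with hvdef
  have hvec : vec v = ((p:ℤ), (q:ℤ)) := vec_div hp hq hpq
  have hpZ : (1:ℤ) ≤ (p:ℤ) := by exact_mod_cast hp
  have hqZ : (1:ℤ) ≤ (q:ℤ) := by exact_mod_cast hq
  have hne11 : ¬(p = 1 ∧ q = 1) := by
    rintro ⟨rfl, rfl⟩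
    exact hne (by norm_num)
  -- canonical triangle containing v
  obtain ⟨Xc, Yc, hXc, hYc, hdc, hsumc, hXc1, hYc1⟩ := exists_can hp hq hpq
  have hXYc := valid_add hXc hYc hdc
  have hxyc : vtx Xc ≠ vtx Yc := vtx_ne hXc hYc (ne_of_det_one hdc)
  have hmxc : vtx (Xc + Yc) ≠ vtx Xc := vtx_ne hXYc hXc (add_ne_left hYc)
  have hmyc : vtx (Xc + Yc) ≠ vtx Yc := vtx_ne hXYc hYc (add_ne_right hXc)
  have nXYc : FareyNeighbor (vtx Xc) (vtx Yc) :=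
    neighbor_of_det hXc hYc (by rw [hdc]; norm_num)
  have nXMc : FareyNeighbor (vtx Xc) (vtx (Xc + Yc)) :=
    neighbor_of_det hXc hXYc (by rw [det_add_right, hdc]; norm_num)
  have nYMc : FareyNeighbor (vtx Yc) (vtx (Xc + Yc)) :=
    neighbor_of_det hYc hXYc (by rw [det_add_right', hdc]; norm_num)
  set Tcan := mkTriangle (vtx Xc) (vtx Yc) (vtx (Xc + Yc)) hxyc (Ne.symm hmxc) (Ne.symm hmyc)
    nXYc nXMc nYMc with hTcan
  have hTcanv : Tcan.verts = {vtx Xc, vtx Yc, vtx (Xc + Yc)} := rfl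
  have hvTcan : v ∈ Tcan.verts := by
    rw [hTcanv]
    have : v = vtx (Xc + Yc) := eq_vtx_of_vec (hvec.trans hsumc.symm)
    rw [this]
    simp
  have hnegTcan : ¬ neg Tcan := by
    rintro ⟨w, hw, hwneg⟩
    rw [hTcanv] at hw
    simp only [Finset.mem_insert, Finset.mem_singleton] at hw
    rcases hw with rfl | rfl | rfl
    · rw [fnum_vtx hXc] at hwneg; omega
    · rw [fnum_vtx hYc] at hwneg; omega
    · rw [fnum_vtx hXYc] at hwneg
      have : (Xc + Yc).1 = (p:ℤ) := congrArg Prod.fst hsumc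
      omega
  have hrkTcan : rk Tcan = S p q - 1 := by
    obtain ⟨r1, s1, -⟩ := rk_decomp hnegTcan hXc hYc hdc hTcanv
    rw [hsumc, S2_pq] at s1
    omega
  -- rk Tm bounded by S p q - 1
  have hdTm := dist_eq_rk Tm
  have hdTcan := dist_eq_rk Tcan
  have hminrk : rk Tm ≤ S p q - 1 := by
    have := hmin Tcan hvTcan
    rw [hdTm, hdTcan, hrkTcan] at this
    exact this
  -- Tm is nonnegative
  have hnTm : ¬ neg Tm := by
    intro hneg
    rcases neg_all hneg v hTm with h2 | h2
    · have : fnum v = (p:ℤ) := congrArg Prod.fst hvec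
      omega
    · have : fden v = (q:ℤ) := congrArg Prod.snd hvec
      omega
  obtain ⟨X, Y, hX, hY, hd, hTv⟩ := decomp_verts Tm
  have hXY := valid_add hX hY hd
  obtain ⟨r1, s1, -⟩ := rk_decomp hnTm hX hY hd hTv
  have hXnn : 0 ≤ X.1 := by
    have hm : vtx X ∈ Tm.verts := by rw [hTv]; simp
    have := nonneg_fnum hnTm hm
    rwa [fnum_vtx hX] at this
  have hYnn : 0 ≤ Y.1 := by
    have hm : vtx Y ∈ Tm.verts := by rw [hTv]; simp
    have := nonneg_fnum hnTm hm
    rwa [fnum_vtx hY] at this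
  have hSpos : 1 ≤ S p q := S_pos hp hq
  -- v must be the mediant vertex of Tm
  have hvm : v = vtx (X + Y) := by
    have hvmem : v ∈ ({vtx X, vtx Y, vtx (X + Y)} : Finset FareyVertex) := hTv ▸ hTm
    simp only [Finset.mem_insert, Finset.mem_singleton] at hvmem
    rcases hvmem with h | h | h
    · exfalso
      have hXeq : X = ((p:ℤ), (q:ℤ)) := by rw [← vec_vtx hX, ← h, hvec]
      have : S2 X = S p q := by rw [hXeq, S2_pq]
      omega
    · exfalso
      have hYeq : Y = ((p:ℤ), (q:ℤ)) := by rw [← vec_vtx hY, ← h, hvec]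
      have : S2 Y = S p q := by rw [hYeq, S2_pq]
      omega
    · exact h
  have hsum_eq : X + Y = ((p:ℤ), (q:ℤ)) := by
    rw [← vec_vtx hXY, ← hvm, hvec]
  rw [hsum_eq, S2_pq] at s1
  -- S p q is at least 2
  have hS2 : 2 ≤ S p q := by
    by_contra hc
    have hmax0 : max (S2 X) (S2 Y) = 0 := by omega
    have hX0 := S2_zero_valid hX hXnn (by omega)
    have hY0 := S2_zero_valid hY hYnn (by omega)
    have hsum11 : X + Y = ((1:ℤ), (1:ℤ)) := by
      rcases hX0 with rfl | rfl <;> rcases hY0 with rfl | rfl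
      · exact absurd rfl (ne_of_det_one hd)
      · refine Prod.ext (by norm_num) (by norm_num)
      · refine Prod.ext (by norm_num) (by norm_num)
      · exact absurd rfl (ne_of_det_one hd)
    rw [hsum_eq] at hsum11
    have hp1 : (p:ℤ) = 1 := by have := congrArg Prod.fst hsum11; simpa using this
    have hq1 : (q:ℤ) = 1 := by have := congrArg Prod.snd hsum11; simpa using this
    exact hne11 ⟨by exact_mod_cast hp1, by exact_mod_cast hq1⟩
  have hrkTm : rk Tm = S p q - 1 := by omega
  -- Tm is not the base triangle
  have hTm0 : Tm ≠ stdTriangle 0 := by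
    intro he
    rw [he, std0_verts] at hTm
    simp only [Finset.mem_insert, Finset.mem_singleton] at hTm
    rcases hTm with h | h | h
    · have : ((p:ℤ), (q:ℤ)) = ((0:ℤ), (1:ℤ)) := by rw [← hvec, h]; rfl
      have := congrArg Prod.fst this
      omega
    · have : ((p:ℤ), (q:ℤ)) = ((1:ℤ), (1:ℤ)) := by rw [← hvec, h]; rfl
      have h1 : (p:ℤ) = 1 := by have := congrArg Prod.fst this; simpa using this
      have h2 : (q:ℤ) = 1 := by have := congrArg Prod.snd this; simpa using this
      exact hne11 ⟨by exact_mod_cast h1, by exact_mod_cast h2⟩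
    · have : ((p:ℤ), (q:ℤ)) = ((1:ℤ), (0:ℤ)) := by rw [← hvec, h]; rfl
      have := congrArg Prod.snd this
      omega
  -- the parent triangle
  obtain ⟨TV, hadj, hrkstep, hnTV, hTVv⟩ := parent_of_decomp hnTm hTm0 hX hY hd hTv
  have hW := valid_compv hX hY hd
  have hvnot : v ∉ TV.verts := by
    intro hmem
    rw [hTVv] at hmem
    simp only [Finset.mem_insert, Finset.mem_singleton] at hmem
    rcases hmem with h | h | h
    · have hXeq : X = ((p:ℤ), (q:ℤ)) := by rw [← vec_vtx hX, ← h, hvec]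
      exact add_ne_left hY (hsum_eq.trans hXeq.symm)
    · have hYeq : Y = ((p:ℤ), (q:ℤ)) := by rw [← vec_vtx hY, ← h, hvec]
      exact add_ne_right hX (hsum_eq.trans hYeq.symm)
    · have hWeq : compv X Y = ((p:ℤ), (q:ℤ)) := by rw [← vec_vtx hW, ← h, hvec]
      exact compv_ne_add hX hY hd (hWeq.trans hsum_eq.symm)
  have hxy : vtx X ≠ vtx Y := vtx_ne hX hY (ne_of_det_one hd)
  -- uniqueness of TV
  have huniq : ∀ T' : FareyTriangle, fareyTree.Adj Tm T' → v ∉ T'.verts → T' = TV := by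
    intro T' hadj' hnot'
    have hint : (Tm.verts ∩ T'.verts).card = 2 := hadj'
    have hsub : Tm.verts ∩ T'.verts ⊆ {vtx X, vtx Y} := by
      intro w hw
      have hw1 := (Finset.mem_inter.mp hw).1
      have hw2 := (Finset.mem_inter.mp hw).2
      rw [hTv] at hw1
      simp only [Finset.mem_insert, Finset.mem_singleton] at hw1 ⊢
      rcases hw1 with h | h | h
      · exact Or.inl h
      · exact Or.inr h
      · exfalso
        rw [h, ← hvm] at hw2
        exact hnot' hw2
    have hpr : Tm.verts ∩ T'.verts = {vtx X, vtx Y} := by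
      apply Finset.eq_of_subset_of_card_le hsub
      rw [hint, Finset.card_pair hxy]
    have hXT' : vtx X ∈ T'.verts := by
      have : vtx X ∈ Tm.verts ∩ T'.verts := by rw [hpr]; simp
      exact (Finset.mem_inter.mp this).2
    have hYT' : vtx Y ∈ T'.verts := by
      have : vtx Y ∈ Tm.verts ∩ T'.verts := by rw [hpr]; simp
      exact (Finset.mem_inter.mp this).2
    obtain ⟨z', hz'1, hz'2, hT'v⟩ := third_of_pair hXT' hYT' hxy
    have hmz' : z' ∈ T'.verts := by rw [hT'v]; simp
    have nz'X := T'.neighbors _ hXT' z' hmz' (Ne.symm hz'1)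
    have nz'Y := T'.neighbors _ hYT' z' hmz' (Ne.symm hz'2)
    rcases third_vertex hX hY hd nz'X nz'Y with e | e
    · exfalso
      have : z' = v := by
        rw [hvm]
        exact eq_vtx_of_vec e
      rw [this] at hmz'
      exact hnot' hmz'
    · apply FareyTriangle.ext
      rw [hT'v, hTVv, eq_vtx_of_vec e]
  have hdistTV : fareyTree.dist TV (stdTriangle 0) = S p q - 2 := by
    rw [dist_eq_rk]
    omega
  constructor
  · exact ⟨TV, ⟨hadj, hvnot⟩, fun T' h' => huniq T' h'.1 h'.2⟩
  · intro TV' hadj' hnot'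
    rw [huniq TV' hadj' hnot', hdistTV]
    omega
end
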